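/- arXiv:1904.12053 — 6 statements merged into one kernel-verified Lean document; each statement's English description precedes it below -/
import Mathlib

section
/- Let μ be a probability measure on a measurable space S, and let κ₁, κ₂ be Markov kernels from S to a measurable space T. Let ε, ε' ≥ 0, and suppose that μ({x ∈ S : D_TV(κ₁(x), κ₂(x)) ≤ ε'}) ≥ 1 − ε. Then the total variation distance between the two joint laws on S × T, namely μ ⊗ κ₁ and μ ⊗ κ₂ (the measures given by A ↦ ∫ κᵢ(x)(A_x) dμ(x)), satisfies D_TV(μ ⊗ κ₁, μ ⊗ κ₂) ≤ ε + ε'. -/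
open MeasureTheory ProbabilityTheory

/-- Total variation distance between two measures: the supremum over measurable
sets `A` of `|μ A - ν A|`. -/
noncomputable def tvDist {Ω : Type*} [MeasurableSpace Ω] (μ ν : Measure Ω) : ℝ :=
  ⨆ A : {A : Set Ω // MeasurableSet A}, |(μ A).toReal - (ν A).toReal|

lemma abs_sub_toReal_le_tvDist {Ω : Type*} [MeasurableSpace Ω] (μ ν : Measure Ω)
    [IsProbabilityMeasure μ] [IsProbabilityMeasure ν] {A : Set Ω} (hA : MeasurableSet A) :
    |(μ A).toReal - (ν A).toReal| ≤ tvDist μ ν := by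
  refine le_ciSup_of_le ?_ (⟨A, hA⟩ : {A : Set Ω // MeasurableSet A}) le_rfl
  refine ⟨1, ?_⟩
  rintro r ⟨⟨B, hB⟩, rfl⟩
  have h1 : (μ B).toReal ≤ 1 := by
    simpa using ENNReal.toReal_mono ENNReal.one_ne_top (prob_le_one (μ := μ) (s := B))
  have h2 : (ν B).toReal ≤ 1 := by
    simpa using ENNReal.toReal_mono ENNReal.one_ne_top (prob_le_one (μ := ν) (s := B))
  have h3 : (0:ℝ) ≤ (μ B).toReal := ENNReal.toReal_nonneg
  have h4 : (0:ℝ) ≤ (ν B).toReal := ENNReal.toReal_nonneg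
  rw [abs_sub_le_iff]
  constructor <;> linarith

/-- If with probability at least `1 − ε` over `x ∼ μ` the conditional laws `κ₁ x` and
`κ₂ x` are within total variation distance `ε'`, then the joint laws `μ ⊗ κ₁` and
`μ ⊗ κ₂` are within total variation distance `ε + ε'`. -/
theorem tvDist_compProd_le {S T : Type*} [MeasurableSpace S] [MeasurableSpace T]
    (μ : Measure S) [IsProbabilityMeasure μ]
    (κ₁ κ₂ : Kernel S T) [IsMarkovKernel κ₁] [IsMarkovKernel κ₂]
    (ε ε' : ℝ) (hε : 0 ≤ ε) (hε' : 0 ≤ ε')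
    (h : ENNReal.ofReal (1 - ε) ≤ μ {x : S | tvDist (κ₁ x) (κ₂ x) ≤ ε'}) :
    tvDist (μ ⊗ₘ κ₁) (μ ⊗ₘ κ₂) ≤ ε + ε' := by
  refine ciSup_le ?_
  rintro ⟨A, hA⟩
  set f : S → ENNReal := fun x => κ₁ x (Prod.mk x ⁻¹' A) with hfdef
  set g : S → ENNReal := fun x => κ₂ x (Prod.mk x ⁻¹' A) with hgdef
  have hf : Measurable f := Kernel.measurable_kernel_prodMk_left hA
  have hg : Measurable g := Kernel.measurable_kernel_prodMk_left hA
  have hfle : ∀ x, f x ≤ 1 := fun x => prob_le_one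
  have hgle : ∀ x, g x ≤ 1 := fun x => prob_le_one
  set F : S → ℝ := fun x => (f x).toReal with hFdef
  set G : S → ℝ := fun x => (g x).toReal with hGdef
  have hF : Measurable F := hf.ennreal_toReal
  have hG : Measurable G := hg.ennreal_toReal
  have hF01 : ∀ x, 0 ≤ F x ∧ F x ≤ 1 := fun x =>
    ⟨ENNReal.toReal_nonneg, by simpa using ENNReal.toReal_mono ENNReal.one_ne_top (hfle x)⟩
  have hG01 : ∀ x, 0 ≤ G x ∧ G x ≤ 1 := fun x =>
    ⟨ENNReal.toReal_nonneg, by simpa using ENNReal.toReal_mono ENNReal.one_ne_top (hgle x)⟩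
  have hFint : Integrable F μ := by
    refine (integrable_const (1:ℝ)).mono' hF.aestronglyMeasurable (ae_of_all _ fun x => ?_)
    rw [Real.norm_eq_abs, abs_of_nonneg (hF01 x).1]; exact (hF01 x).2
  have hGint : Integrable G μ := by
    refine (integrable_const (1:ℝ)).mono' hG.aestronglyMeasurable (ae_of_all _ fun x => ?_)
    rw [Real.norm_eq_abs, abs_of_nonneg (hG01 x).1]; exact (hG01 x).2
  have h1 : ((μ ⊗ₘ κ₁) A).toReal = ∫ x, F x ∂μ := by
    rw [Measure.compProd_apply hA,
      ← integral_toReal hf.aemeasurable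
        (ae_of_all _ fun x => lt_of_le_of_lt (hfle x) ENNReal.one_lt_top)]
  have h2 : ((μ ⊗ₘ κ₂) A).toReal = ∫ x, G x ∂μ := by
    rw [Measure.compProd_apply hA,
      ← integral_toReal hg.aemeasurable
        (ae_of_all _ fun x => lt_of_le_of_lt (hgle x) ENNReal.one_lt_top)]
  rw [h1, h2]
  -- the good set
  set D : Set S := {x | |F x - G x| ≤ ε'} with hDdef
  have hD : MeasurableSet D := measurableSet_le (hF.sub hG).abs measurable_const
  have hsub : {x : S | tvDist (κ₁ x) (κ₂ x) ≤ ε'} ⊆ D := by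
    intro x hx
    have := abs_sub_toReal_le_tvDist (κ₁ x) (κ₂ x) (A := Prod.mk x ⁻¹' A)
      (measurable_prodMk_left hA)
    exact le_trans this hx
  have hμD : ENNReal.ofReal (1 - ε) ≤ μ D := le_trans h (measure_mono hsub)
  have hμDc : μ Dᶜ ≤ ENNReal.ofReal ε := by
    have hcompl : μ Dᶜ = 1 - μ D := prob_compl_eq_one_sub hD
    rw [hcompl]
    refine le_trans (tsub_le_tsub_left hμD 1) ?_
    rw [tsub_le_iff_right]
    rcases le_or_gt ε 1 with hle | hlt
    · rw [← ENNReal.ofReal_add hε (by linarith)]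
      simp
    · calc (1:ENNReal) ≤ ENNReal.ofReal ε := by
            rw [← ENNReal.ofReal_one]; exact ENNReal.ofReal_le_ofReal hlt.le
        _ ≤ ENNReal.ofReal ε + ENNReal.ofReal (1 - ε) := le_self_add
  have hμDcR : (μ Dᶜ).toReal ≤ ε :=
    ENNReal.toReal_le_of_le_ofReal hε hμDc
  have hμDR : (μ D).toReal ≤ 1 := by
    simpa using ENNReal.toReal_mono ENNReal.one_ne_top (prob_le_one (μ := μ) (s := D))
  have habs : Integrable (fun x => |F x - G x|) μ := (hFint.sub hGint).abs
  calc |∫ x, F x ∂μ - ∫ x, G x ∂μ|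
      = |∫ x, (F x - G x) ∂μ| := by rw [integral_sub hFint hGint]
    _ ≤ ∫ x, |F x - G x| ∂μ := by
        simpa [Real.norm_eq_abs] using
          norm_integral_le_integral_norm (fun x => F x - G x) (μ := μ)
    _ = (∫ x in D, |F x - G x| ∂μ) + ∫ x in Dᶜ, |F x - G x| ∂μ :=
        (integral_add_compl hD habs).symm
    _ ≤ ε' * (μ D).toReal + 1 * (μ Dᶜ).toReal := by
        gcongr ?_ + ?_
        · calc (∫ x in D, |F x - G x| ∂μ) ≤ ∫ _x in D, ε' ∂μ := by
                refine setIntegral_mono_on habs.integrableOn (integrableOn_const ?_) hD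
                  (fun x hx => hx)
                exact measure_ne_top μ D
            _ = ε' * (μ D).toReal := by rw [setIntegral_const, smul_eq_mul, measureReal_def]; ring
        · calc (∫ x in Dᶜ, |F x - G x| ∂μ) ≤ ∫ _x in Dᶜ, (1:ℝ) ∂μ := by
                refine setIntegral_mono_on habs.integrableOn (integrableOn_const ?_)
                  hD.compl (fun x _ => ?_)
                · exact measure_ne_top μ Dᶜ
                · rw [abs_sub_le_iff]
                  constructor
                  · linarith [(hF01 x).2, (hG01 x).1]
                  · linarith [(hG01 x).2, (hF01 x).1]
            _ = 1 * (μ Dᶜ).toReal := by rw [setIntegral_const, smul_eq_mul, measureReal_def]; ring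
    _ ≤ ε' * 1 + 1 * ε := by
        nlinarith [hμDR, hμDcR, ENNReal.toReal_nonneg (a := μ D),
          ENNReal.toReal_nonneg (a := μ Dᶜ)]
    _ = ε + ε' := by ring
end

section
/- Let d ≥ 1, let n, r > 0 be reals with r ≤ n/18, let μ̂ ∈ ℝ^d, and set α = 10r/(r + n/2). Let p denote the Lebesgue density of N(0, I_d) on ℝ^d and q the Lebesgue density of the mixture (1−α)·N(0, I_d) + α·N(μ̂, I_d). Then the Hellinger distance satisfies H(N(0,I_d), (1−α)·N(0,I_d) + α·N(μ̂,I_d)) := (∫_{ℝ^d} (√(p(x)) − √(q(x)))² dx)^{1/2} ≤ (24r/n)·e^{3‖μ̂‖²/2}. -/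
open MeasureTheory ProbabilityTheory

/-- The Lebesgue density of the Gaussian `N(μ, I_d)` on `ℝ^d`, i.e. the product of the
one-dimensional unit-variance Gaussian densities. -/
noncomputable def gaussianIdPDF {d : ℕ} (μ : Fin d → ℝ) (x : Fin d → ℝ) : ℝ :=
  ∏ i, gaussianPDFReal (μ i) 1 (x i)

lemma gaussianPDFReal_sq (μ x : ℝ) :
    gaussianPDFReal μ 1 x ^ 2 =
      Real.exp (μ ^ 2) * gaussianPDFReal (2 * μ) 1 x * gaussianPDFReal 0 1 x := by
  simp only [gaussianPDFReal, NNReal.coe_one, mul_one]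
  rw [mul_pow, pow_two (Real.exp _), ← Real.exp_add]
  have h : Real.exp (μ ^ 2) * ((Real.sqrt (2 * Real.pi))⁻¹ * Real.exp (-(x - 2 * μ) ^ 2 / 2)) *
      ((Real.sqrt (2 * Real.pi))⁻¹ * Real.exp (-(x - 0) ^ 2 / 2)) =
      ((Real.sqrt (2 * Real.pi))⁻¹) ^ 2 *
        Real.exp (μ ^ 2 + (-(x - 2 * μ) ^ 2 / 2 + -(x - 0) ^ 2 / 2)) := by
    rw [Real.exp_add, Real.exp_add]; ring
  rw [h]
  congr 1
  ring

lemma gaussianIdPDF_sq {d : ℕ} (μ : Fin d → ℝ) (x : Fin d → ℝ) :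
    gaussianIdPDF μ x ^ 2 =
      Real.exp (∑ i, μ i ^ 2) * gaussianIdPDF (fun i => 2 * μ i) x *
        gaussianIdPDF (0 : Fin d → ℝ) x := by
  simp only [gaussianIdPDF, Real.exp_sum, Pi.zero_apply, mul_assoc, ← Finset.prod_mul_distrib,
    ← Finset.prod_pow]
  exact Finset.prod_congr rfl fun i _ => by rw [gaussianPDFReal_sq]; ring

lemma gaussianIdPDF_integrable {d : ℕ} (μ : Fin d → ℝ) :
    Integrable (gaussianIdPDF μ) :=
  Integrable.fintype_prod (f := fun i => gaussianPDFReal (μ i) 1)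
    fun i => integrable_gaussianPDFReal _ _

lemma gaussianIdPDF_integral {d : ℕ} (μ : Fin d → ℝ) :
    ∫ x : Fin d → ℝ, gaussianIdPDF μ x = 1 := by
  unfold gaussianIdPDF
  rw [MeasureTheory.integral_fintype_prod_volume_eq_prod]
  simp [integral_gaussianPDFReal_eq_one _ one_ne_zero]

/-- Hellinger-distance bound between the standard Gaussian `N(0, I_d)` and the mixture
`(1−α)·N(0, I_d) + α·N(μ̂, I_d)` with `α = 10r/(r + n/2)`:  for `r ≤ n/18`, the Hellinger
distance is at most `(24r/n)·exp(3‖μ̂‖²/2)`. -/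
theorem hellinger_gaussian_mixture (d : ℕ) (hd : 1 ≤ d) (n r : ℝ) (hn : 0 < n)
    (hr : 0 < r) (hrn : r ≤ n / 18) (muhat : Fin d → ℝ) :
    Real.sqrt (∫ x : Fin d → ℝ,
        (Real.sqrt (gaussianIdPDF (0 : Fin d → ℝ) x) -
          Real.sqrt ((1 - 10 * r / (r + n / 2)) * gaussianIdPDF (0 : Fin d → ℝ) x +
            (10 * r / (r + n / 2)) * gaussianIdPDF muhat x)) ^ 2)
      ≤ 24 * r / n * Real.exp (3 * (∑ i, (muhat i) ^ 2) / 2) := by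
  have hrn2 : 0 < r + n / 2 := by linarith
  set α := 10 * r / (r + n / 2) with hα_def
  set M := ∑ i, (muhat i) ^ 2 with hM_def
  set p := gaussianIdPDF (0 : Fin d → ℝ) with hp_def
  set pm := gaussianIdPDF muhat with hpm_def
  set p2 := gaussianIdPDF (fun i => 2 * muhat i) with hp2_def
  have hα0 : 0 < α := by positivity
  have hα1 : α ≤ 1 := by rw [hα_def, div_le_one hrn2]; linarith
  have hα20 : α ≤ 20 * r / n := by
    rw [hα_def, div_le_div_iff₀ hrn2 hn]; nlinarith
  have hM0 : 0 ≤ M := Finset.sum_nonneg fun i _ => sq_nonneg _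
  have hp_pos : ∀ x, 0 < p x := fun x =>
    Finset.prod_pos fun i _ => gaussianPDFReal_pos _ _ _ one_ne_zero
  have hpm_nonneg : ∀ x, 0 ≤ pm x := fun x =>
    Finset.prod_nonneg fun i _ => gaussianPDFReal_nonneg _ _ _
  have hpm2 : ∀ x, pm x ^ 2 = Real.exp M * p2 x * p x := fun x => gaussianIdPDF_sq muhat x
  -- pointwise bound
  have hpoint : ∀ x, (Real.sqrt (p x) - Real.sqrt ((1 - α) * p x + α * pm x)) ^ 2 ≤
      α ^ 2 * (p x - 2 * pm x + Real.exp M * p2 x) := by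
    intro x
    have hqnn : 0 ≤ (1 - α) * p x + α * pm x := by
      have h1 : 0 ≤ (1 - α) * p x := mul_nonneg (by linarith) (hp_pos x).le
      have h2 : 0 ≤ α * pm x := mul_nonneg hα0.le (hpm_nonneg x)
      linarith
    set a := Real.sqrt (p x) with ha_def
    set b := Real.sqrt ((1 - α) * p x + α * pm x) with hb_def
    have ha : a ^ 2 = p x := Real.sq_sqrt (hp_pos x).le
    have hb : b ^ 2 = (1 - α) * p x + α * pm x := Real.sq_sqrt hqnn
    have ha0 : 0 ≤ a := Real.sqrt_nonneg _
    have hb0 : 0 ≤ b := Real.sqrt_nonneg _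
    have key : (a - b) ^ 2 * a ^ 2 ≤ (a ^ 2 - b ^ 2) ^ 2 := by
      nlinarith [sq_nonneg (a - b), sq_nonneg (a + b), mul_nonneg ha0 hb0]
    have hfin : (a - b) ^ 2 * p x ≤
        α ^ 2 * (p x - 2 * pm x + Real.exp M * p2 x) * p x := by
      calc (a - b) ^ 2 * p x = (a - b) ^ 2 * a ^ 2 := by rw [ha]
        _ ≤ (a ^ 2 - b ^ 2) ^ 2 := key
        _ = α ^ 2 * (p x - 2 * pm x + Real.exp M * p2 x) * p x := by
            rw [ha, hb]; linear_combination α ^ 2 * hpm2 x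
    exact le_of_mul_le_mul_right hfin (hp_pos x)
  -- integrability of the bounding function
  have hg_int : Integrable (fun x : Fin d → ℝ =>
      α ^ 2 * (p x - 2 * pm x + Real.exp M * p2 x)) :=
    ((((gaussianIdPDF_integrable _).sub
      ((gaussianIdPDF_integrable _).const_mul 2)).add
      ((gaussianIdPDF_integrable _).const_mul (Real.exp M))).const_mul _)
  have hInt_le : (∫ x : Fin d → ℝ,
      (Real.sqrt (p x) - Real.sqrt ((1 - α) * p x + α * pm x)) ^ 2)
      ≤ α ^ 2 * (Real.exp M - 1) := by
    have hmono := integral_mono_of_nonneg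
      (ae_of_all _ fun x => sq_nonneg (Real.sqrt (p x) - Real.sqrt ((1 - α) * p x + α * pm x)))
      hg_int (ae_of_all _ hpoint)
    have i1 : Integrable (fun x : Fin d → ℝ =>
        gaussianIdPDF (0 : Fin d → ℝ) x - 2 * gaussianIdPDF muhat x) :=
      (gaussianIdPDF_integrable _).sub ((gaussianIdPDF_integrable _).const_mul 2)
    have i2 : Integrable (fun x : Fin d → ℝ =>
        Real.exp M * gaussianIdPDF (fun i => 2 * muhat i) x) :=
      (gaussianIdPDF_integrable _).const_mul _
    have i3 : Integrable (fun x : Fin d → ℝ => 2 * gaussianIdPDF muhat x) :=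
      (gaussianIdPDF_integrable _).const_mul 2
    have hval : (∫ x : Fin d → ℝ, α ^ 2 * (p x - 2 * pm x + Real.exp M * p2 x))
        = α ^ 2 * (Real.exp M - 1) := by
      rw [hp_def, hpm_def, hp2_def, integral_const_mul,
        integral_add i1 i2, integral_sub (gaussianIdPDF_integrable _) i3,
        integral_const_mul, integral_const_mul,
        gaussianIdPDF_integral, gaussianIdPDF_integral, gaussianIdPDF_integral]
      ring
    linarith [hmono, hval.le, hval.ge]
  calc Real.sqrt (∫ x : Fin d → ℝ,
        (Real.sqrt (p x) - Real.sqrt ((1 - α) * p x + α * pm x)) ^ 2)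
      ≤ Real.sqrt (α ^ 2 * (Real.exp M - 1)) := Real.sqrt_le_sqrt hInt_le
    _ = α * Real.sqrt (Real.exp M - 1) := by
        rw [Real.sqrt_mul (sq_nonneg α), Real.sqrt_sq hα0.le]
    _ ≤ α * Real.exp (M / 2) := by
        refine mul_le_mul_of_nonneg_left ?_ hα0.le
        rw [Real.exp_half]
        exact Real.sqrt_le_sqrt (by linarith)
    _ ≤ 24 * r / n * Real.exp (3 * M / 2) := by
        have h1 : α ≤ 24 * r / n := hα20.trans (by gcongr <;> linarith)
        have h2 : Real.exp (M / 2) ≤ Real.exp (3 * M / 2) :=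
          Real.exp_le_exp.mpr (by linarith)
        exact mul_le_mul h1 h2 (Real.exp_nonneg _) (div_nonneg (by linarith) hn.le)
end

section
/- Let k ≥ 1 and let n be an integer with √k/2 < n ≤ k/2. Let X₁,…,Xₙ be i.i.d. uniform draws from a set of k elements, and let U = |{X₁,…,Xₙ}| be the number of distinct values among them. Then Pr(U ≥ E[U] + 7n/√k) ≤ 1/8. -/
open MeasureTheory ProbabilityTheory
open scoped NNReal ENNReal

/-- The uniform probability measure on a (nonempty) finite set `S`. -/
noncomputable def unifFinset {A : Type*} [MeasurableSpace A] (S : Finset A) : Measure A :=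
  (S.card : ℝ≥0∞)⁻¹ • ∑ a ∈ S, Measure.dirac a

/-- The number of distinct values among the coordinates of `x`. -/
noncomputable def numDistinct {n k : ℕ} (x : Fin n → Fin k) : ℕ :=
  (Finset.univ.image x).card

/- Auxiliary elementary inequalities. -/

lemma aux_pow_sub_pow_le (m : ℕ) {x y : ℝ} (hy : 0 ≤ y) (hxy : y ≤ x) :
    x ^ (m+1) - y ^ (m+1) ≤ ((m+1 : ℕ) : ℝ) * (x - y) * x ^ m := by
  induction m with
  | zero => simp
  | succ m ih =>
    have hx : 0 ≤ x := hy.trans hxy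
    have h1 : y ^ (m+1) ≤ x ^ (m+1) := pow_le_pow_left₀ hy hxy _
    push_cast at ih ⊢
    have h3 := mul_le_mul_of_nonneg_left ih hx
    have h4 := mul_le_mul_of_nonneg_left h1 (sub_nonneg.2 hxy)
    simp only [pow_succ] at *
    nlinarith [h3, h4]

lemma aux_mul_le_pow_sub_pow (m : ℕ) {x y : ℝ} (hy : 0 ≤ y) (hxy : y ≤ x) :
    ((m+1 : ℕ) : ℝ) * (x - y) * y ^ m ≤ x ^ (m+1) - y ^ (m+1) := by
  induction m with
  | zero => simp
  | succ m ih =>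
    have hx : 0 ≤ x := hy.trans hxy
    push_cast at ih ⊢
    have h3 := mul_le_mul_of_nonneg_left ih hx
    have h5 : y * y ^ m ≤ x * y ^ m := mul_le_mul_of_nonneg_right hxy (pow_nonneg hy m)
    simp only [pow_succ] at *
    nlinarith [h3, h5, pow_nonneg hy m,
      mul_nonneg (mul_nonneg (sub_nonneg.2 hxy) (sub_nonneg.2 hxy)) (pow_nonneg hy m)]

lemma aux_pow_sub_pow_le' (m : ℕ) {x y : ℝ} (hy : 0 ≤ y) (hxy : y ≤ x) (hx1 : x ≤ 1) :
    x ^ m - y ^ m ≤ m * (x - y) := by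
  induction m with
  | zero => simp
  | succ m ih =>
    have hx : 0 ≤ x := hy.trans hxy
    have h1 : y ^ m ≤ x ^ m := pow_le_pow_left₀ hy hxy _
    have h2 : x ^ m ≤ 1 := pow_le_one₀ hx hx1
    push_cast
    simp only [pow_succ] at *
    nlinarith [h1, h2, sub_nonneg.2 hxy, pow_nonneg hy m]

/- Measure-theoretic facts about the uniform product measure. -/

lemma unif_singleton {k : ℕ} (a : Fin k) :
    unifFinset (Finset.univ : Finset (Fin k)) {a} = (k : ℝ≥0∞)⁻¹ := by
  simp [unifFinset, Measure.finset_sum_apply, Measure.dirac_apply', Set.indicator]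

instance unif_prob {k : ℕ} [NeZero k] :
    IsProbabilityMeasure (unifFinset (Finset.univ : Finset (Fin k))) := by
  constructor
  have hk : k ≠ 0 := NeZero.ne k
  simp [unifFinset, Measure.finset_sum_apply]
  rw [ENNReal.inv_mul_cancel] <;> simp [hk]

lemma pi_singleton {k n : ℕ} [NeZero k] (x : Fin n → Fin k) :
    (Measure.pi fun _ : Fin n => unifFinset (Finset.univ : Finset (Fin k))) {x}
      = ((k : ℝ≥0∞) ^ n)⁻¹ := by
  rw [← Set.univ_pi_singleton x, Measure.pi_pi]
  simp [unif_singleton, ENNReal.inv_pow]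

lemma integral_formula {k n : ℕ} [NeZero k] (f : (Fin n → Fin k) → ℝ) :
    ∫ x, f x ∂(Measure.pi fun _ : Fin n => unifFinset (Finset.univ : Finset (Fin k)))
      = ((k : ℝ) ^ n)⁻¹ * ∑ x : Fin n → Fin k, f x := by
  rw [integral_fintype .of_finite]
  simp only [Measure.real, pi_singleton, smul_eq_mul]
  rw [Finset.mul_sum]
  congr 1
  ext x
  congr 1
  simp [ENNReal.toReal_inv]

/- Combinatorial sums. -/

noncomputable def avoidInd {n k : ℕ} (v : Fin k) (x : Fin n → Fin k) : ℝ :=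
  ∏ i, (if x i = v then (0:ℝ) else 1)

lemma numDistinct_eq {n k : ℕ} (x : Fin n → Fin k) :
    (numDistinct x : ℝ) = ∑ v : Fin k, (1 - avoidInd v x) := by
  have h1 : ∀ v : Fin k, (1 : ℝ) - avoidInd v x
      = if v ∈ Finset.univ.image x then 1 else 0 := by
    intro v
    by_cases hv : v ∈ Finset.univ.image x
    · obtain ⟨i, -, hi⟩ := Finset.mem_image.mp hv
      have hz : (∏ i : Fin n, if x i = v then (0:ℝ) else 1) = 0 :=
        Finset.prod_eq_zero (Finset.mem_univ i) (if_pos hi)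
      rw [if_pos hv, avoidInd, hz]; ring
    · rw [if_neg hv, avoidInd, Finset.prod_eq_one]
      · ring
      · intro i _
        rw [if_neg]
        intro h
        exact hv (Finset.mem_image.mpr ⟨i, Finset.mem_univ i, h⟩)
  rw [Finset.sum_congr rfl fun v _ => h1 v, Finset.sum_ite_mem, Finset.univ_inter,
    Finset.sum_const, nsmul_eq_mul, mul_one, numDistinct]

lemma sum_avoid_one {k : ℕ} (v : Fin k) :
    ∑ a : Fin k, (if a = v then (0:ℝ) else 1) = (k : ℝ) - 1 := by
  have : ∀ a : Fin k, (if a = v then (0:ℝ) else 1) = 1 - (if a = v then 1 else 0) := by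
    intro a; by_cases h : a = v <;> simp [h]
  simp only [this, Finset.sum_sub_distrib, Finset.sum_const, Finset.sum_ite_eq', Finset.mem_univ]
  simp

lemma sum_avoid_two {k : ℕ} {v w : Fin k} (hvw : v ≠ w) :
    ∑ a : Fin k, (if a = v then (0:ℝ) else 1) * (if a = w then 0 else 1) = (k : ℝ) - 2 := by
  have : ∀ a : Fin k, (if a = v then (0:ℝ) else 1) * (if a = w then 0 else 1)
      = 1 - (if a = v then 1 else 0) - (if a = w then 1 else 0) := by
    intro a
    by_cases h1 : a = v
    · subst h1; simp [hvw, Ne.symm hvw]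
    · by_cases h2 : a = w <;> simp [h1, h2, Ne.symm hvw]
  simp only [this, Finset.sum_sub_distrib, Finset.sum_const, Finset.sum_ite_eq', Finset.mem_univ]
  simp
  ring

lemma sum_prod_pow {n k : ℕ} (g : Fin k → ℝ) :
    ∑ x : Fin n → Fin k, ∏ i, g (x i) = (∑ a : Fin k, g a) ^ n := by
  rw [← Fintype.prod_sum (fun (_ : Fin n) (a : Fin k) => g a)]
  simp

lemma sum_avoidInd {n k : ℕ} (v : Fin k) :
    ∑ x : Fin n → Fin k, avoidInd v x = ((k : ℝ) - 1) ^ n := by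
  have h := sum_prod_pow (n := n) (fun a : Fin k => if a = v then (0:ℝ) else 1)
  rw [sum_avoid_one] at h
  exact h

lemma sum_avoidInd_mul {n k : ℕ} {v w : Fin k} (hvw : v ≠ w) :
    ∑ x : Fin n → Fin k, avoidInd v x * avoidInd w x = ((k : ℝ) - 2) ^ n := by
  have heq : ∀ x : Fin n → Fin k, avoidInd v x * avoidInd w x
      = ∏ i, ((if x i = v then (0:ℝ) else 1) * (if x i = w then 0 else 1)) := by
    intro x; rw [avoidInd, avoidInd, ← Finset.prod_mul_distrib]
  have h := sum_prod_pow (n := n)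
    (fun a : Fin k => (if a = v then (0:ℝ) else 1) * (if a = w then 0 else 1))
  rw [sum_avoid_two hvw] at h
  rw [Finset.sum_congr rfl fun x _ => heq x]
  exact h

lemma sum_avoidInd_sq {n k : ℕ} (v : Fin k) :
    ∑ x : Fin n → Fin k, avoidInd v x * avoidInd v x = ((k : ℝ) - 1) ^ n := by
  have heq : ∀ x : Fin n → Fin k, avoidInd v x * avoidInd v x = avoidInd v x := by
    intro x
    rw [avoidInd, ← Finset.prod_mul_distrib]
    exact Finset.prod_congr rfl fun i _ => by by_cases h : x i = v <;> simp [h]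
  rw [Finset.sum_congr rfl fun x _ => heq x, sum_avoidInd]

lemma sum_one_nk (n k : ℕ) : ∑ _x : Fin n → Fin k, (1:ℝ) = (k:ℝ) ^ n := by
  rw [Finset.sum_const, Finset.card_univ]
  simp

lemma sum_numDistinct {n k : ℕ} :
    ∑ x : Fin n → Fin k, (numDistinct x : ℝ)
      = k * ((k:ℝ) ^ n - ((k:ℝ) - 1) ^ n) := by
  simp only [numDistinct_eq]
  rw [Finset.sum_comm]
  have : ∀ v : Fin k, ∑ x : Fin n → Fin k, (1 - avoidInd v x)
      = (k:ℝ) ^ n - ((k:ℝ) - 1) ^ n := by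
    intro v
    rw [Finset.sum_sub_distrib, sum_one_nk, sum_avoidInd]
  rw [Finset.sum_congr rfl fun v _ => this v, Finset.sum_const, Finset.card_univ]
  simp [mul_comm]

lemma sum_numDistinct_sq {n k : ℕ} :
    ∑ x : Fin n → Fin k, (numDistinct x : ℝ) ^ 2
      = (k:ℝ)^2 * ((k:ℝ) ^ n - 2 * ((k:ℝ) - 1) ^ n) + k * ((k:ℝ) - 1) ^ n
        + k * ((k:ℝ) - 1) * ((k:ℝ) - 2) ^ n := by
  have expand : ∀ x : Fin n → Fin k, (numDistinct x : ℝ) ^ 2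
      = ∑ v : Fin k, ∑ w : Fin k,
          (1 - avoidInd v x - avoidInd w x + avoidInd v x * avoidInd w x) := by
    intro x
    rw [sq, numDistinct_eq, Finset.sum_mul_sum]
    exact Finset.sum_congr rfl fun v _ => Finset.sum_congr rfl fun w _ => by ring
  simp only [expand]
  rw [Finset.sum_comm]
  have inner : ∀ v : Fin k, ∑ x : Fin n → Fin k, ∑ w : Fin k,
      (1 - avoidInd v x - avoidInd w x + avoidInd v x * avoidInd w x)
      = (k:ℝ) * ((k:ℝ)^n - 2*((k:ℝ)-1)^n) + ((k:ℝ)-1)^n + ((k:ℝ)-1) * ((k:ℝ)-2)^n := by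
    intro v
    rw [Finset.sum_comm]
    have hw : ∀ w : Fin k, ∑ x : Fin n → Fin k,
        (1 - avoidInd v x - avoidInd w x + avoidInd v x * avoidInd w x)
        = ((k:ℝ)^n - 2*((k:ℝ)-1)^n)
          + (if w = v then ((k:ℝ)-1)^n else ((k:ℝ)-2)^n) := by
      intro w
      simp only [Finset.sum_add_distrib, Finset.sum_sub_distrib, sum_one_nk, sum_avoidInd]
      by_cases h : w = v
      · subst h; rw [sum_avoidInd_sq, if_pos rfl]; ring
      · rw [sum_avoidInd_mul (Ne.symm h), if_neg h]; ring
    rw [Finset.sum_congr rfl fun w _ => hw w, Finset.sum_add_distrib, Finset.sum_const,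
      Finset.card_univ]
    have : ∑ w : Fin k, (if w = v then ((k:ℝ)-1)^n else ((k:ℝ)-2)^n)
        = ((k:ℝ)-1)^n + ((k:ℝ)-1) * ((k:ℝ)-2)^n := by
      have : ∀ w : Fin k, (if w = v then ((k:ℝ)-1)^n else ((k:ℝ)-2)^n)
          = ((k:ℝ)-2)^n + (if w = v then ((k:ℝ)-1)^n - ((k:ℝ)-2)^n else 0) := by
        intro w; by_cases h : w = v <;> simp [h]
      rw [Finset.sum_congr rfl fun w _ => this w, Finset.sum_add_distrib, Finset.sum_const,
        Finset.card_univ, Finset.sum_ite_eq', if_pos (Finset.mem_univ v)]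
      simp
      ring
    rw [this]
    simp
    ring
  rw [Finset.sum_congr rfl fun v _ => inner v, Finset.sum_const, Finset.card_univ]
  simp
  ring

set_option maxHeartbeats 1000000 in
/-- Upper tail bound for the number `U` of distinct values among `n` i.i.d. uniform draws
from a `k`-element set, for `√k/2 < n ≤ k/2`: `Pr(U ≥ E[U] + 7n/√k) ≤ 1/8`. -/
theorem unique_count_upper_tail (k n : ℕ) (hk : 1 ≤ k)
    (h1 : Real.sqrt k / 2 < n) (h2 : (n : ℝ) ≤ k / 2) :
    (Measure.pi fun _ : Fin n => unifFinset (Finset.univ : Finset (Fin k)))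
        {x : Fin n → Fin k |
          (∫ y : Fin n → Fin k, (numDistinct y : ℝ)
              ∂(Measure.pi fun _ : Fin n => unifFinset (Finset.univ : Finset (Fin k))))
            + 7 * n / Real.sqrt k ≤ (numDistinct x : ℝ)}
      ≤ 1 / 8 := by
  haveI : NeZero k := ⟨by omega⟩
  set μ := Measure.pi fun _ : Fin n => unifFinset (Finset.univ : Finset (Fin k)) with hμ
  set X : (Fin n → Fin k) → ℝ := fun x => (numDistinct x : ℝ) with hX
  -- basic numeric facts
  have hk0 : (0:ℝ) < k := by exact_mod_cast Nat.pos_of_ne_zero (by omega)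
  have hsk1 : (1:ℝ) ≤ Real.sqrt k := by
    rw [show (1:ℝ) = Real.sqrt 1 by simp]
    exact Real.sqrt_le_sqrt (by exact_mod_cast hk)
  have hn1 : 1 ≤ n := by
    by_contra h
    have : n = 0 := by omega
    subst this
    simp at h1
    nlinarith
  have hn0 : (0:ℝ) < n := by exact_mod_cast hn1
  have hk2 : 2 ≤ k := by
    have : (2:ℝ) ≤ k := by
      have : (1:ℝ) ≤ (k:ℝ)/2 := le_trans (by exact_mod_cast hn1) h2
      linarith
    exact_mod_cast this
  have hk2' : (2:ℝ) ≤ k := by exact_mod_cast hk2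
  have hsk0 : (0:ℝ) < Real.sqrt k := by linarith
  -- integrability
  have hmem : MemLp X 2 μ := ⟨.of_discrete, eLpNorm_lt_top_of_finite⟩
  haveI : IsProbabilityMeasure μ := by
    constructor
    rw [hμ, Measure.pi_univ]
    simp [measure_univ]
  -- the two moments
  have hNpos : (0:ℝ) < (k:ℝ)^n := pow_pos hk0 n
  have hEU : μ[X] = ((k:ℝ)^n)⁻¹ * ((k:ℝ) * ((k:ℝ)^n - ((k:ℝ)-1)^n)) := by
    rw [hμ, hX, integral_formula, sum_numDistinct]
  have hEU2 : μ[X^2] = ((k:ℝ)^n)⁻¹ * ((k:ℝ)^2 * ((k:ℝ) ^ n - 2 * ((k:ℝ) - 1) ^ n)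
      + k * ((k:ℝ) - 1) ^ n + k * ((k:ℝ) - 1) * ((k:ℝ) - 2) ^ n) := by
    have : μ[X^2] = ∫ x, (numDistinct x : ℝ)^2 ∂μ := by
      congr 1
    rw [this, hμ, integral_formula, sum_numDistinct_sq]
  -- variance in terms of a, b
  set a : ℝ := ((k:ℝ)-1)/k with ha
  set b : ℝ := ((k:ℝ)-2)/k with hb
  have hb0 : 0 ≤ b := by
    rw [hb]
    apply div_nonneg (by linarith) hk0.le
  have hba : b ≤ a := by
    rw [ha, hb, div_le_div_iff₀ hk0 hk0]
    nlinarith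
  have ha1 : a ≤ 1 := by
    rw [ha, div_le_one hk0]; linarith
  have hba2 : b ≤ a^2 := by
    rw [ha, hb, div_pow, div_le_div_iff₀ hk0 (by positivity)]
    nlinarith
  have hab : a - b = 1/k := by rw [ha, hb]; field_simp <;> ring_nf <;> norm_num
  have ha2b : a^2 - b = 1/(k:ℝ)^2 := by rw [ha, hb]; field_simp <;> ring_nf
  have hApow : ((k:ℝ)-1)^n = a^n * (k:ℝ)^n := by
    rw [ha, div_pow]; field_simp
  have hBpow : ((k:ℝ)-2)^n = b^n * (k:ℝ)^n := by
    rw [hb, div_pow]; field_simp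
  have hvar : variance X μ = (k:ℝ) * (a^n - b^n) - (k:ℝ)^2 * ((a^2)^n - b^n) := by
    rw [variance_eq_sub hmem, hEU2, hEU, hApow, hBpow]
    have : ((a:ℝ)^2)^n = (a^n)^2 := by rw [← pow_mul, ← pow_mul, mul_comm]
    rw [this]
    field_simp
    ring
  -- bound the variance
  have hm : n - 1 + 1 = n := by omega
  have L1 := aux_pow_sub_pow_le (n-1) hb0 hba
  have L2 := aux_mul_le_pow_sub_pow (n-1) hb0 hba2
  have L3 := aux_pow_sub_pow_le' (n-1) hb0 hba ha1
  rw [hm] at L1 L2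
  have hcast : ((n-1:ℕ):ℝ) = (n:ℝ) - 1 := by
    rw [Nat.cast_sub hn1]; simp
  rw [hcast] at L3
  have hVarle : variance X μ ≤ (n:ℝ)^2 / k := by
    rw [hvar]
    have H1 : (k:ℝ) * (a^n - b^n) ≤ (n:ℝ) * a^(n-1) := by
      have := mul_le_mul_of_nonneg_left L1 hk0.le
      have e : (k:ℝ) * ((n:ℝ) * (a - b) * a^(n-1)) = (n:ℝ) * a^(n-1) := by
        rw [hab]; field_simp <;> ring
      rw [e] at this
      linarith
    have H2 : (n:ℝ) * b^(n-1) ≤ (k:ℝ)^2 * ((a^2)^n - b^n) := by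
      have := mul_le_mul_of_nonneg_left L2 (by positivity : (0:ℝ) ≤ (k:ℝ)^2)
      have e : (k:ℝ)^2 * ((n:ℝ) * (a^2 - b) * b^(n-1)) = (n:ℝ) * b^(n-1) := by
        rw [ha2b]; field_simp <;> ring
      rw [e] at this
      linarith
    have H3 : (n:ℝ) * (a^(n-1) - b^(n-1)) ≤ (n:ℝ) * (((n:ℝ)-1) * (a-b)) :=
      mul_le_mul_of_nonneg_left L3 hn0.le
    rw [hab] at H3
    have e2 : (n:ℝ) * (((n:ℝ)-1) * (1/(k:ℝ))) = ((n:ℝ)*((n:ℝ)-1))/k := by ring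
    have hfin : (n:ℝ) * (((n:ℝ)-1) * (1/(k:ℝ))) ≤ (n:ℝ)^2/(k:ℝ) := by
      rw [e2]
      gcongr
      nlinarith
    nlinarith [H1, H2, H3, hfin]
  -- Chebyshev
  set c : ℝ := 7 * n / Real.sqrt k with hc
  have hcpos : 0 < c := by rw [hc]; positivity
  have hsubset : {x : Fin n → Fin k | μ[X] + c ≤ X x}
      ⊆ {x : Fin n → Fin k | c ≤ |X x - μ[X]|} := by
    intro x hx
    simp only [Set.mem_setOf_eq] at *
    have : c ≤ X x - μ[X] := by linarith
    exact this.trans (le_abs_self _)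
  have hcsq : c^2 = 49 * (n:ℝ)^2 / k := by
    rw [hc, div_pow, mul_pow, Real.sq_sqrt hk0.le]
    norm_num
  have hfinal : variance X μ / c^2 ≤ 1/8 := by
    rw [hcsq, div_le_iff₀ (by positivity)]
    have hnk : (0:ℝ) ≤ (n:ℝ)^2/k := by positivity
    have he : 49 * (n:ℝ)^2 / k = 49 * ((n:ℝ)^2/k) := by ring
    rw [he]
    linarith [hVarle, hnk]
  calc μ {x : Fin n → Fin k | μ[X] + c ≤ X x}
      ≤ μ {x : Fin n → Fin k | c ≤ |X x - μ[X]|} := measure_mono hsubset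
    _ ≤ ENNReal.ofReal (variance X μ / c^2) := meas_ge_le_variance_div_sq hmem hcpos
    _ ≤ ENNReal.ofReal (1/8) := ENNReal.ofReal_le_ofReal hfinal
    _ = 1/8 := by
        rw [show (1:ℝ)/8 = (8:ℝ)⁻¹ by norm_num,
          ENNReal.ofReal_inv_of_pos (by norm_num), ENNReal.ofReal_ofNat, one_div]
end

section
/- Let k ≥ 1 and let n, m be integers with √k/2 < n, n ≤ m ≤ 2n, and m ≤ k/2. Let X₁,…,X_m be i.i.d. uniform draws from a set of k elements, and let U = |{X₁,…,X_m}| be the number of distinct values among them. Then Pr(U ≤ E[U] − 8n/√k) ≤ 1/8. -/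
open MeasureTheory ProbabilityTheory
open scoped NNReal ENNReal

lemma pow_sub_pow_low (p : ℕ) {x y : ℝ} (hy : 0 ≤ y) (hxy : y ≤ x) :
    ((p+1 : ℕ) : ℝ) * y ^ p * (x - y) ≤ x ^ (p+1) - y ^ (p+1) := by
  induction p with
  | zero => simp
  | succ p ih =>
    have h1 : y ^ (p+1) ≤ x ^ (p+1) := pow_le_pow_left₀ hy hxy _
    have k1 : y * (((p+1:ℕ):ℝ) * y ^ p * (x - y)) ≤ y * (x ^ (p+1) - y ^ (p+1)) :=
      mul_le_mul_of_nonneg_left ih hy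
    have k2 : y * (x ^ (p+1) - y ^ (p+1)) ≤ x * (x ^ (p+1) - y ^ (p+1)) :=
      mul_le_mul_of_nonneg_right hxy (sub_nonneg.2 h1)
    have e1 : x ^ (p+1+1) - y ^ (p+1+1)
        = x * (x ^ (p+1) - y ^ (p+1)) + (x - y) * y ^ (p+1) := by ring
    have e2 : ((p+1+1:ℕ):ℝ) * y ^ (p+1) * (x - y)
        = y * (((p+1:ℕ):ℝ) * y ^ p * (x - y)) + (x - y) * y ^ (p+1) := by push_cast; ring
    linarith

lemma pow_sub_pow_upp (p : ℕ) {x y : ℝ} (hy : 0 ≤ y) (hxy : y ≤ x) :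
    x ^ (p+1) - y ^ (p+1) ≤ ((p+1 : ℕ) : ℝ) * x ^ p * (x - y) := by
  induction p with
  | zero => simp
  | succ p ih =>
    have hx : 0 ≤ x := hy.trans hxy
    have k1 : x * (x ^ (p+1) - y ^ (p+1)) ≤ x * (((p+1:ℕ):ℝ) * x ^ p * (x - y)) :=
      mul_le_mul_of_nonneg_left ih hx
    have k2 : (x - y) * y ^ (p+1) ≤ (x - y) * x ^ (p+1) :=
      mul_le_mul_of_nonneg_left (pow_le_pow_left₀ hy hxy _) (sub_nonneg.2 hxy)
    have e1 : x ^ (p+1+1) - y ^ (p+1+1)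
        = x * (x ^ (p+1) - y ^ (p+1)) + (x - y) * y ^ (p+1) := by ring
    have e2 : ((p+1+1:ℕ):ℝ) * x ^ (p+1) * (x - y)
        = x * (((p+1:ℕ):ℝ) * x ^ p * (x - y)) + (x - y) * x ^ (p+1) := by push_cast; ring
    linarith

lemma pow_sub_pow_upp1 (p : ℕ) {x y : ℝ} (hy : 0 ≤ y) (hxy : y ≤ x) (hx1 : x ≤ 1) :
    x ^ p - y ^ p ≤ (p : ℝ) * (x - y) := by
  induction p with
  | zero => simp
  | succ p ih =>
    have hx : 0 ≤ x := hy.trans hxy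
    have hd : 0 ≤ x ^ p - y ^ p := sub_nonneg.2 (pow_le_pow_left₀ hy hxy _)
    have hyp : y ^ p ≤ 1 := pow_le_one₀ hy (hxy.trans hx1)
    have k1 : x * (x ^ p - y ^ p) ≤ 1 * (x ^ p - y ^ p) := mul_le_mul_of_nonneg_right hx1 hd
    have k2 : (x - y) * y ^ p ≤ (x - y) * 1 :=
      mul_le_mul_of_nonneg_left hyp (sub_nonneg.2 hxy)
    have e1 : x ^ (p+1) - y ^ (p+1) = x * (x ^ p - y ^ p) + (x - y) * y ^ p := by ring
    push_cast
    push_cast at ih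
    nlinarith

lemma var_core (k m : ℕ) (hm : 1 ≤ m) (hkm : 2*m ≤ k) :
    (k:ℝ) * (((k-1:ℕ):ℝ)/k)^m + (k:ℝ) * ((k-1:ℕ):ℝ) * (((k-2:ℕ):ℝ)/k)^m
      - ((k:ℝ) * (((k-1:ℕ):ℝ)/k)^m)^2 ≤ (m:ℝ)^2/k := by
  obtain ⟨p, rfl⟩ : ∃ p, m = p + 1 := ⟨m - 1, (Nat.succ_pred_eq_of_pos hm).symm⟩
  have hk2 : 2 ≤ k := by omega
  have hK0 : (0:ℝ) < k := by exact_mod_cast Nat.lt_of_lt_of_le two_pos hk2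
  set K : ℝ := (k:ℝ) with hK
  have c1 : ((k-1:ℕ):ℝ) = K - 1 := by push_cast [Nat.cast_sub (by omega : 1 ≤ k)]; ring
  have c2 : ((k-2:ℕ):ℝ) = K - 2 := by push_cast [Nat.cast_sub hk2]; ring
  rw [c1, c2]
  have hK2 : (2:ℝ) ≤ K := by rw [hK]; exact_mod_cast hk2
  set A : ℝ := (K - 1)/K with hA
  set B : ℝ := (K - 2)/K with hB
  have hB0 : 0 ≤ B := div_nonneg (by linarith) (by linarith)
  have hBA : B ≤ A := by rw [hA, hB]; gcongr <;> linarith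
  have hA0 : 0 ≤ A := hB0.trans hBA
  have hA1 : A ≤ 1 := by rw [hA, div_le_one hK0]; linarith
  have hAB : A - B = 1/K := by rw [hA, hB]; field_simp; ring
  have hA2B : A^2 - B = 1/K^2 := by rw [hA, hB]; field_simp; ring
  have hBA2 : B ≤ A^2 := by
    have h0 : (0:ℝ) ≤ 1/K^2 := by positivity
    linarith
  -- step 1 : lower bound on (A^2)^(p+1) - B^(p+1)
  have s1 := pow_sub_pow_low p hB0 hBA2
  rw [hA2B] at s1
  -- step 2 : upper bound on A^(p+1) - B^(p+1)
  have s2 := pow_sub_pow_upp p hB0 hBA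
  rw [hAB] at s2
  -- step 3
  have s3 : A^p - B^p ≤ (p:ℝ) * (1/K) := by
    have := pow_sub_pow_upp1 p hB0 hBA hA1
    rwa [hAB] at this
  have hsq : (K * A^(p+1))^2 = K^2 * (A^2)^(p+1) := by
    rw [mul_pow, ← pow_right_comm]
  rw [hsq]
  have e1 : K^2 * (((p+1:ℕ):ℝ) * B^p * (1/K^2)) = ((p+1:ℕ):ℝ) * B^p := by
    field_simp
  have h1 : ((p+1:ℕ):ℝ) * B^p ≤ K^2 * ((A^2)^(p+1) - B^(p+1)) := by
    rw [← e1]; exact mul_le_mul_of_nonneg_left s1 (sq_nonneg K)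
  have e2 : K * (((p+1:ℕ):ℝ) * A^p * (1/K)) = ((p+1:ℕ):ℝ) * A^p := by
    field_simp
  have h2 : K * (A^(p+1) - B^(p+1)) ≤ ((p+1:ℕ):ℝ) * A^p := by
    rw [← e2]; exact mul_le_mul_of_nonneg_left s2 (by positivity)
  have h3 : ((p+1:ℕ):ℝ) * (A^p - B^p) ≤ ((p+1:ℕ):ℝ) * ((p:ℝ) * (1/K)) :=
    mul_le_mul_of_nonneg_left s3 (by positivity)
  have h4 : ((p:ℝ)+1) * ((p:ℝ) * (1/K)) ≤ ((p:ℝ)+1)^2 / K := by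
    rw [show ((p:ℝ)+1) * ((p:ℝ)*(1/K)) = (((p:ℝ)+1)*(p:ℝ))/K by ring]
    gcongr
    nlinarith [sq_nonneg ((p:ℝ)+1)]
  push_cast at h1 h2 h3 ⊢
  linarith [h1, h2, h3, h4]

lemma unif_compl (k : ℕ) (T : Finset (Fin k)) :
    unifFinset (Finset.univ : Finset (Fin k)) ((T : Set (Fin k))ᶜ)
      = ((k - T.card : ℕ) : ℝ≥0∞) / k := by
  have hms : MeasurableSet ((T : Set (Fin k))ᶜ) := .of_discrete
  rw [unifFinset, Measure.smul_apply, Measure.coe_finset_sum, Finset.sum_apply,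
    Finset.card_univ, Fintype.card_fin]
  have : ∀ a : Fin k, Measure.dirac a ((T : Set (Fin k))ᶜ)
      = if a ∈ T then 0 else 1 := by
    intro a
    rw [Measure.dirac_apply' _ hms, Set.indicator_apply]
    by_cases h : a ∈ T <;> simp [h]
  rw [Finset.sum_congr rfl fun a _ => this a]
  rw [Finset.sum_ite, Finset.sum_const, Finset.sum_const]
  simp only [smul_zero, zero_add, smul_eq_mul, mul_one]
  have hcard : (Finset.univ.filter (fun a => a ∉ T)).card = k - T.card := by
    have : Finset.univ.filter (fun a => a ∉ T) = Tᶜ := by ext a; simp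
    rw [this, Finset.card_compl, Fintype.card_fin]
  rw [hcard]
  simp [ENNReal.div_eq_inv_mul]

lemma unif_prob_s12 (k : ℕ) (hk : 1 ≤ k) :
    IsProbabilityMeasure (unifFinset (Finset.univ : Finset (Fin k))) := by
  constructor
  have := unif_compl k ∅
  simp only [Finset.coe_empty, Set.compl_empty, Finset.card_empty, Nat.sub_zero] at this
  rw [this]
  exact ENNReal.div_self (by simp; omega) (by simp)

lemma pi_avoid (k m : ℕ) (hk : 1 ≤ k) (T : Finset (Fin k)) :
    (Measure.pi fun _ : Fin m => unifFinset (Finset.univ : Finset (Fin k)))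
      {x : Fin m → Fin k | ∀ i, x i ∉ T}
      = (((k - T.card : ℕ) : ℝ≥0∞) / k) ^ m := by
  haveI := unif_prob_s12 k hk
  have hset : {x : Fin m → Fin k | ∀ i, x i ∉ T}
      = Set.univ.pi (fun _ : Fin m => (T : Set (Fin k))ᶜ) := by
    ext x; simp [Set.mem_pi]
  rw [hset, Measure.pi_pi]
  simp [unif_compl k T]

section Moments
variable (k m : ℕ)

noncomputable def Wfun (x : Fin m → Fin k) : ℝ :=
  ∑ v : Fin k, ({y : Fin m → Fin k | ∀ i, y i ∉ ({v} : Finset (Fin k))}).indicator 1 x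

lemma Wfun_eq (x : Fin m → Fin k) : Wfun k m x = (k : ℝ) - numDistinct x := by
  classical
  rw [Wfun]
  have : ∀ v : Fin k, ({y : Fin m → Fin k | ∀ i, y i ∉ ({v} : Finset (Fin k))}).indicator
      (1 : (Fin m → Fin k) → ℝ) x = if ∀ i, x i ≠ v then 1 else 0 := by
    intro v
    rw [Set.indicator_apply]
    simp
  rw [Finset.sum_congr rfl fun v _ => this v, Finset.sum_boole]
  have hfil : (Finset.univ.filter fun v => ∀ i, x i ≠ v) = (Finset.univ.image x)ᶜ := by
    ext v
    simp [eq_comm]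
  rw [hfil, Finset.card_compl, Fintype.card_fin, numDistinct,
    Nat.cast_sub (Finset.card_le_univ _ |>.trans (by simp))]

lemma Wfun_int (hk : 1 ≤ k) :
    ∫ x, Wfun k m x ∂(Measure.pi fun _ : Fin m => unifFinset (Finset.univ : Finset (Fin k)))
      = (k : ℝ) * (((k-1:ℕ):ℝ)/k)^m := by
  haveI := unif_prob_s12 k hk
  set ν := Measure.pi fun _ : Fin m => unifFinset (Finset.univ : Finset (Fin k)) with hν
  have hint : ∀ v : Fin k, Integrable
      (({y : Fin m → Fin k | ∀ i, y i ∉ ({v} : Finset (Fin k))}).indicator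
        (1 : (Fin m → Fin k) → ℝ)) ν := fun v => .of_finite
  calc ∫ x, Wfun k m x ∂ν
      = ∑ v : Fin k, ∫ x,
          ({y : Fin m → Fin k | ∀ i, y i ∉ ({v} : Finset (Fin k))}).indicator 1 x ∂ν := by
        rw [← integral_finset_sum _ fun v _ => hint v]; rfl
    _ = ∑ v : Fin k, (ν {y : Fin m → Fin k | ∀ i, y i ∉ ({v} : Finset (Fin k))}).toReal := by
        refine Finset.sum_congr rfl fun v _ => ?_
        exact integral_indicator_one .of_discrete
    _ = ∑ v : Fin k, (((k-1:ℕ):ℝ)/k)^m := by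
        refine Finset.sum_congr rfl fun v _ => ?_
        rw [hν, pi_avoid k m hk {v}, Finset.card_singleton, ENNReal.toReal_pow,
          ENNReal.toReal_div, ENNReal.toReal_natCast, ENNReal.toReal_natCast]
    _ = (k : ℝ) * (((k-1:ℕ):ℝ)/k)^m := by
        rw [Finset.sum_const, Finset.card_univ, Fintype.card_fin, nsmul_eq_mul]

lemma Wfun_sq_int (hk : 1 ≤ k) :
    ∫ x, (Wfun k m x)^2 ∂(Measure.pi fun _ : Fin m => unifFinset (Finset.univ : Finset (Fin k)))
      = (k : ℝ) * (((k-1:ℕ):ℝ)/k)^m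
        + (k : ℝ) * ((k-1:ℕ):ℝ) * (((k-2:ℕ):ℝ)/k)^m := by
  classical
  haveI := unif_prob_s12 k hk
  set ν := Measure.pi fun _ : Fin m => unifFinset (Finset.univ : Finset (Fin k)) with hν
  set S : Fin k → Set (Fin m → Fin k) := fun v => {y | ∀ i, y i ∉ ({v} : Finset (Fin k))}
    with hS
  have hsq : ∀ x, (Wfun k m x)^2
      = ∑ v : Fin k, ∑ w : Fin k, ((S v ∩ S w).indicator (1 : (Fin m → Fin k) → ℝ)) x := by
    intro x
    rw [Wfun, sq, Finset.sum_mul_sum]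
    refine Finset.sum_congr rfl fun v _ => Finset.sum_congr rfl fun w _ => ?_
    rw [Set.inter_indicator_one]
    rfl
  simp only [hsq]
  rw [integral_finset_sum _ fun v _ => (integrable_finset_sum _ fun w _ => .of_finite)]
  have hin : ∀ v w : Fin k, S v ∩ S w = {y : Fin m → Fin k | ∀ i, y i ∉ ({v, w} : Finset (Fin k))} := by
    intro v w
    ext y
    simp only [hS, Set.mem_inter_iff, Set.mem_setOf_eq, Finset.mem_singleton, Finset.mem_insert]
    constructor
    · rintro ⟨hv, hw⟩ i h
      rcases h with h | h
      · exact hv i h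
      · exact hw i (by simpa using h)
    · exact fun h => ⟨fun i hh => h i (Or.inl hh), fun i hh => h i (Or.inr (by simpa using hh))⟩
  have hval : ∀ v w : Fin k, ∫ x, ((S v ∩ S w).indicator (1 : (Fin m → Fin k) → ℝ)) x ∂ν
      = (((k - ({v,w} : Finset (Fin k)).card : ℕ):ℝ)/k)^m := by
    intro v w
    rw [integral_indicator_one .of_discrete, measureReal_def, hin v w, hν, pi_avoid k m hk,
      ENNReal.toReal_pow, ENNReal.toReal_div, ENNReal.toReal_natCast, ENNReal.toReal_natCast]
  calc ∑ v : Fin k, ∫ x, (∑ w : Fin k, ((S v ∩ S w).indicator (1 : (Fin m → Fin k) → ℝ)) x) ∂ν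
      = ∑ v : Fin k, ∑ w : Fin k, (((k - ({v,w} : Finset (Fin k)).card : ℕ):ℝ)/k)^m := by
        refine Finset.sum_congr rfl fun v _ => ?_
        rw [integral_finset_sum _ fun w _ => .of_finite]
        exact Finset.sum_congr rfl fun w _ => hval v w
    _ = ∑ v : Fin k, ((((k-1:ℕ):ℝ)/k)^m + ((Finset.univ.erase v).card : ℝ) * (((k-2:ℕ):ℝ)/k)^m) := by
        refine Finset.sum_congr rfl fun v _ => ?_
        rw [← Finset.add_sum_erase _ _ (Finset.mem_univ v)]
        congr 1
        · congr 2
          simp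
        · rw [Finset.sum_congr rfl fun w hw => ?_, Finset.sum_const, nsmul_eq_mul]
          have hvw : w ≠ v := Finset.ne_of_mem_erase hw
          congr 3
          rw [Finset.card_insert_of_notMem (by simp [hvw.symm]), Finset.card_singleton]
    _ = (k : ℝ) * (((k-1:ℕ):ℝ)/k)^m + (k : ℝ) * ((k-1:ℕ):ℝ) * (((k-2:ℕ):ℝ)/k)^m := by
        rw [Finset.sum_add_distrib, Finset.sum_const, Finset.sum_congr rfl
          (fun v _ => by rw [Finset.card_erase_of_mem (Finset.mem_univ v), Finset.card_univ,
            Fintype.card_fin]), Finset.sum_const]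
        simp [Finset.card_univ, mul_assoc, Nat.cast_sub hk]

end Moments

/-- Lower tail bound for the number `U` of distinct values among `m` i.i.d. uniform draws
from a `k`-element set, where `√k/2 < n`, `n ≤ m ≤ 2n` and `m ≤ k/2`:
`Pr(U ≤ E[U] − 8n/√k) ≤ 1/8`. -/
theorem unique_count_lower_tail (k n m : ℕ) (hk : 1 ≤ k)
    (h1 : Real.sqrt k / 2 < n) (h2 : n ≤ m) (h3 : m ≤ 2 * n) (h4 : (m : ℝ) ≤ k / 2) :
    (Measure.pi fun _ : Fin m => unifFinset (Finset.univ : Finset (Fin k)))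
        {x : Fin m → Fin k |
          (numDistinct x : ℝ) ≤
            (∫ y : Fin m → Fin k, (numDistinct y : ℝ)
              ∂(Measure.pi fun _ : Fin m => unifFinset (Finset.univ : Finset (Fin k))))
            - 8 * n / Real.sqrt k}
      ≤ 1 / 8 := by
  classical
  haveI := unif_prob_s12 k hk
  set ν := Measure.pi fun _ : Fin m => unifFinset (Finset.univ : Finset (Fin k)) with hν
  -- basic numeric facts
  have hk0 : (0:ℝ) < k := by exact_mod_cast hk
  have hsk : 0 < Real.sqrt k := Real.sqrt_pos.mpr hk0
  have hn0 : (0:ℝ) < n := lt_trans (by positivity) h1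
  have hn1 : 1 ≤ n := by exact_mod_cast Nat.one_le_iff_ne_zero.mpr (by
    rintro rfl; simp at hn0)
  have hm1 : 1 ≤ m := le_trans hn1 h2
  have hk2m : 2 * m ≤ k := by
    have : ((2*m : ℕ):ℝ) ≤ (k:ℝ) := by push_cast; linarith
    exact_mod_cast this
  -- the auxiliary random variable W = k - numDistinct
  have hX : MemLp (Wfun k m) 2 ν := .of_discrete
  have hEW := Wfun_int k m hk
  have hEW2 := Wfun_sq_int k m hk
  rw [← hν] at hEW hEW2
  have hVar : variance (Wfun k m) ν
      = (k : ℝ) * (((k-1:ℕ):ℝ)/k)^m + (k : ℝ) * ((k-1:ℕ):ℝ) * (((k-2:ℕ):ℝ)/k)^m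
        - ((k : ℝ) * (((k-1:ℕ):ℝ)/k)^m)^2 := by
    rw [variance_eq_sub hX]
    have : ∫ x, (Wfun k m ^ 2) x ∂ν = ∫ x, (Wfun k m x)^2 ∂ν := rfl
    rw [this, hEW2, hEW]
  have hVarle : variance (Wfun k m) ν ≤ (m:ℝ)^2 / k := by
    rw [hVar]; exact var_core k m hm1 hk2m
  -- rewrite the event
  have hrel : ∀ x : Fin m → Fin k, (numDistinct x : ℝ) = (k:ℝ) - Wfun k m x := by
    intro x; rw [Wfun_eq]; ring
  have hEU : ∫ y : Fin m → Fin k, (numDistinct y : ℝ) ∂ν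
      = (k:ℝ) - ∫ y, Wfun k m y ∂ν := by
    simp_rw [hrel]
    rw [integral_sub (integrable_const _) .of_finite, integral_const]
    simp
  set t : ℝ := 8 * n / Real.sqrt k with hts
  have ht : 0 < t := by positivity
  have hsub : {x : Fin m → Fin k |
        (numDistinct x : ℝ) ≤ (∫ y : Fin m → Fin k, (numDistinct y : ℝ) ∂ν) - t}
      ⊆ {x : Fin m → Fin k | t ≤ |Wfun k m x - ∫ y, Wfun k m y ∂ν|} := by
    intro x hx
    simp only [Set.mem_setOf_eq] at hx ⊢
    rw [hEU, hrel x] at hx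
    have : t ≤ Wfun k m x - ∫ y, Wfun k m y ∂ν := by linarith
    exact this.trans (le_abs_self _)
  calc ν {x : Fin m → Fin k |
        (numDistinct x : ℝ) ≤ (∫ y : Fin m → Fin k, (numDistinct y : ℝ) ∂ν) - t}
      ≤ ν {x : Fin m → Fin k | t ≤ |Wfun k m x - ∫ y, Wfun k m y ∂ν|} :=
        measure_mono hsub
    _ ≤ ENNReal.ofReal (variance (Wfun k m) ν / t^2) :=
        meas_ge_le_variance_div_sq hX ht
    _ ≤ 1 / 8 := by
        have ht2 : t^2 = 64 * n^2 / k := by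
          rw [hts, div_pow, mul_pow, Real.sq_sqrt hk0.le]
          norm_num
        have hm2n : (m:ℝ)^2 ≤ 4 * n^2 := by
          have : (m:ℝ) ≤ 2*n := by exact_mod_cast h3
          nlinarith [Nat.cast_nonneg (α := ℝ) m]
        have hdiv : variance (Wfun k m) ν / t^2 ≤ 1/8 := by
          rw [div_le_iff₀ (by positivity), ht2]
          calc variance (Wfun k m) ν ≤ (m:ℝ)^2 / k := hVarle
            _ ≤ (4*n^2) / k := by gcongr
            _ ≤ 1/8 * (64 * n^2 / k) := by
                rw [show (1:ℝ)/8 * (64 * n^2 / k) = 8*n^2/k by ring]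
                gcongr
                linarith
        calc ENNReal.ofReal (variance (Wfun k m) ν / t^2)
            ≤ ENNReal.ofReal (1/8) := ENNReal.ofReal_le_ofReal hdiv
          _ = 1/8 := by
              rw [ENNReal.ofReal_div_of_pos (by norm_num)]
              norm_num
end

section
/- Let p > 0, let n > 0 and 0 < r ≤ n be reals, and let u ≥ 0 be a real number. Then the Kullback–Leibler divergence satisfies KL(Poisson((n+r)·p) ‖ Poisson(n·p + r·u/n)) ≤ 2·r²·(u − n·p)² / (n²·p·(n+r)). -/
open MeasureTheory ProbabilityTheory
open scoped NNReal ENNReal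

/-- The Kullback–Leibler divergence between two probability measures on `ℕ`
(for `P ≪ Q`), written as a sum over point masses: `∑ⱼ P(j)·log(P(j)/Q(j))`. -/
noncomputable def klNat (P Q : Measure ℕ) : ℝ :=
  ∑' j : ℕ, (P {j}).toReal * Real.log ((P {j}).toReal / (Q {j}).toReal)

lemma pois_apply (a : ℝ≥0) (j : ℕ) :
    ((poissonMeasure a) {j}).toReal = poissonPMFReal a j := by
  rw [poissonMeasure_singleton]
  show (ENNReal.ofReal (poissonPMFReal a j)).toReal = _
  rw [ENNReal.toReal_ofReal poissonPMFReal_nonneg]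

lemma pois_mean (a : ℝ≥0) : HasSum (fun j : ℕ ↦ (j : ℝ) * poissonPMFReal a j) a := by
  have h1 : HasSum (fun j : ℕ ↦ (a : ℝ) * poissonPMFReal a j) a :=
    by simpa [poissonPMFReal] using (poissonPMFRealSum a).mul_left (a : ℝ)
  have h2 : (fun j : ℕ ↦ ((j + 1 : ℕ) : ℝ) * poissonPMFReal a (j + 1)) =
      fun j : ℕ ↦ (a : ℝ) * poissonPMFReal a j := by
    funext j
    simp only [poissonPMFReal, Nat.factorial_succ, pow_succ]
    push_cast
    field_simp
  have h3 : HasSum (fun j : ℕ ↦ ((j + 1 : ℕ) : ℝ) * poissonPMFReal a (j + 1))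
      ((a : ℝ) - ∑ i ∈ Finset.range 1, (i : ℝ) * poissonPMFReal a i) := by
    rw [h2]; simpa using h1
  exact (hasSum_nat_add_iff' 1).mp h3

lemma klNat_poisson (a b : ℝ) (ha : 0 < a) (hb : 0 < b) :
    klNat (poissonMeasure a.toNNReal) (poissonMeasure b.toNNReal)
      = a * Real.log (a / b) + b - a := by
  have hca : ((a.toNNReal : ℝ≥0) : ℝ) = a := Real.coe_toNNReal a ha.le
  have hcb : ((b.toNNReal : ℝ≥0) : ℝ) = b := Real.coe_toNNReal b hb.le
  have hterm : ∀ j : ℕ,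
      ((poissonMeasure a.toNNReal) {j}).toReal *
        Real.log (((poissonMeasure a.toNNReal) {j}).toReal /
          ((poissonMeasure b.toNNReal) {j}).toReal)
      = (b - a) * poissonPMFReal a.toNNReal j
        + Real.log (a / b) * ((j : ℝ) * poissonPMFReal a.toNNReal j) := by
    intro j
    rw [pois_apply, pois_apply]
    have hfac : (0:ℝ) < j.factorial := by positivity
    have hlog : Real.log (poissonPMFReal a.toNNReal j / poissonPMFReal b.toNNReal j)
        = (b - a) + (j : ℝ) * Real.log (a / b) := by
      rw [poissonPMFReal, poissonPMFReal, hca, hcb]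
      rw [Real.log_div (by positivity) (by positivity),
        Real.log_div (by positivity) (by positivity),
        Real.log_div (by positivity) (by positivity),
        Real.log_mul (Real.exp_ne_zero _) (by positivity),
        Real.log_mul (Real.exp_ne_zero _) (by positivity),
        Real.log_exp, Real.log_exp, Real.log_pow, Real.log_pow,
        Real.log_div ha.ne' hb.ne']
      ring
    rw [hlog]; ring
  rw [klNat]
  rw [tsum_congr hterm]
  have hs1 : HasSum (fun j : ℕ ↦ (b - a) * poissonPMFReal a.toNNReal j) (b - a) := by
    simpa [poissonPMFReal] using (poissonPMFRealSum a.toNNReal).mul_left (b - a)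
  have hs2 : HasSum (fun j : ℕ ↦ Real.log (a / b) * ((j : ℝ) * poissonPMFReal a.toNNReal j))
      (Real.log (a / b) * a) := by
    have := (pois_mean a.toNNReal).mul_left (Real.log (a / b))
    rwa [hca] at this
  rw [(hs1.add hs2).tsum_eq]
  ring

/-- `KL(Poisson((n+r)·p) ‖ Poisson(n·p + r·u/n)) ≤ 2r²(u − np)²/(n²·p·(n+r))`. -/
theorem klNat_poisson_perturbed (p n r u : ℝ) (hp : 0 < p) (hn : 0 < n) (hr : 0 < r)
    (hrn : r ≤ n) (hu : 0 ≤ u) :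
    klNat (poissonMeasure (((n + r) * p).toNNReal))
        (poissonMeasure ((n * p + r * u / n).toNNReal))
      ≤ 2 * r ^ 2 * (u - n * p) ^ 2 / (n ^ 2 * p * (n + r)) := by
  set a := (n + r) * p with hadef
  set b := n * p + r * u / n with hbdef
  have ha : 0 < a := by positivity
  have hb : 0 < b := by positivity
  rw [klNat_poisson a b ha hb]
  have hlog : Real.log (a / b) ≤ a / b - 1 :=
    Real.log_le_sub_one_of_pos (by positivity)
  have h1 : a * Real.log (a / b) + b - a ≤ (a - b) ^ 2 / b := by
    have h2 : a * Real.log (a / b) ≤ a * (a / b - 1) :=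
      mul_le_mul_of_nonneg_left hlog ha.le
    have h3 : a * (a / b - 1) + b - a = (a - b) ^ 2 / b := by
      field_simp; ring
    linarith
  refine h1.trans ?_
  have hab : (a - b) ^ 2 = r ^ 2 * (u - n * p) ^ 2 / n ^ 2 := by
    rw [hadef, hbdef]; field_simp; ring
  rw [hab, div_div]
  rw [div_le_div_iff₀ (by positivity) (by positivity)]
  have hbge : (n + r) * p / 2 ≤ b := by
    rw [hbdef]
    have h0 : 0 ≤ r * u / n := by positivity
    nlinarith
  have key := mul_le_mul_of_nonneg_left hbge
    (by positivity : (0:ℝ) ≤ 2 * (r ^ 2 * (u - n * p) ^ 2) * n ^ 2)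
  clear_value a b
  nlinarith [key]
end

section
/- There exists a constant c' > 0 such that for all sufficiently large n and all m ≥ (1 + c')·n, for every Markov kernel f from {0,1}^n to {0,1}^m there exists p ∈ [0,1] with D_TV(((Bernoulli p)^{⊗n}).bind f, (Bernoulli p)^{⊗m}) > 1/3. (That is, the class of i.i.d. Bernoulli distributions with unknown bias cannot be amplified by more than a constant factor.) -/
open MeasureTheory ProbabilityTheory
open scoped NNReal ENNReal

open Real Nat

namespace BernAmp

noncomputable def w (r : ℝ) (b : Bool) : ℝ := if b then r else 1 - r

noncomputable def W {M : ℕ} (r : ℝ) (x : Fin M → Bool) : ℝ := ∏ j, w r (x j)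

def cnt {M : ℕ} (x : Fin M → Bool) : ℕ := (Finset.univ.filter fun j => x j = true).card

lemma fact_lemma {M : ℕ} (g : Fin M → Bool → ℝ) :
    ∑ x : Fin M → Bool, ∏ j, g j (x j) = ∏ j, (g j false + g j true) := by
  rw [← Fintype.prod_sum]
  exact Finset.prod_congr rfl fun j _ => by rw [Fintype.sum_bool]; ring

lemma sum_W {M : ℕ} (r : ℝ) : ∑ x : Fin M → Bool, W r x = 1 := by
  have := fact_lemma (M := M) (fun _ b => w r b)
  simp only [W]
  rw [this]
  simp [w]

lemma W_nonneg {M : ℕ} {r : ℝ} (h0 : 0 ≤ r) (h1 : r ≤ 1) (x : Fin M → Bool) : 0 ≤ W r x :=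
  Finset.prod_nonneg fun j _ => by unfold w; split <;> linarith

lemma cnt_le {M : ℕ} (x : Fin M → Bool) : cnt x ≤ M := by
  simpa [cnt] using (Finset.card_filter_le Finset.univ (fun j : Fin M => x j = true))

lemma W_eq_pow {M : ℕ} (r : ℝ) (x : Fin M → Bool) :
    W r x = r ^ cnt x * (1 - r) ^ (M - cnt x) := by
  unfold W w cnt
  rw [Finset.prod_ite (fun _ => r) (fun _ => 1 - r), Finset.prod_const, Finset.prod_const]
  congr 1
  have h := Finset.card_filter_add_card_filter_not (s := (Finset.univ : Finset (Fin M)))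
    (p := fun j : Fin M => x j = true)
  simp only [Finset.card_univ, Fintype.card_fin] at h
  congr 1
  omega

end BernAmp

namespace BernAmp

noncomputable def e (r : ℝ) (b : Bool) : ℝ := (if b then 1 else 0) - r

lemma cnt_real {M : ℕ} (x : Fin M → Bool) :
    (cnt x : ℝ) = ∑ j, (if x j = true then (1:ℝ) else 0) := by
  rw [cnt, Finset.card_filter]
  push_cast
  rfl

lemma dev_eq {M : ℕ} (r : ℝ) (x : Fin M → Bool) :
    (cnt x : ℝ) - M * r = ∑ j, e r (x j) := by
  rw [cnt_real]
  unfold e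
  rw [Finset.sum_sub_distrib]
  simp [Finset.card_univ, mul_comm]

lemma inner_sum {M : ℕ} (r : ℝ) (j l : Fin M) :
    ∑ x : Fin M → Bool, W r x * (e r (x j) * e r (x l)) =
      if j = l then r * (1 - r) else 0 := by
  by_cases hjl : j = l
  · subst hjl
    simp only [if_pos rfl]
    have key : ∀ x : Fin M → Bool, W r x * (e r (x j) * e r (x j)) =
        ∏ j', (w r (x j') * (if j' = j then (e r (x j'))^2 else 1)) := by
      intro x
      rw [Finset.prod_mul_distrib, Finset.prod_ite_eq' Finset.univ j
        (fun j' => (e r (x j'))^2), if_pos (Finset.mem_univ j)]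
      unfold W; ring
    rw [Finset.sum_congr rfl (fun x _ => key x),
      fact_lemma (fun j' b => w r b * (if j' = j then (e r b)^2 else 1))]
    rw [Finset.prod_eq_single j]
    · simp only [if_pos rfl]
      unfold w e; norm_num; ring
    · intro j' _ hj'
      simp only [if_neg hj']
      unfold w; norm_num
    · exact fun h => absurd (Finset.mem_univ j) h
  · simp only [if_neg hjl]
    have key : ∀ x : Fin M → Bool, W r x * (e r (x j) * e r (x l)) =
        ∏ j', (w r (x j') * ((if j' = j then e r (x j') else 1) *
          (if j' = l then e r (x j') else 1))) := by
      intro x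
      rw [Finset.prod_mul_distrib, Finset.prod_mul_distrib,
        Finset.prod_ite_eq' Finset.univ j (fun j' => e r (x j')),
        Finset.prod_ite_eq' Finset.univ l (fun j' => e r (x j')),
        if_pos (Finset.mem_univ j), if_pos (Finset.mem_univ l)]
      unfold W; ring
    rw [Finset.sum_congr rfl (fun x _ => key x),
      fact_lemma (fun j' b => w r b * ((if j' = j then e r b else 1) *
        (if j' = l then e r b else 1)))]
    apply Finset.prod_eq_zero (Finset.mem_univ j)
    simp only [if_pos rfl, if_neg hjl]
    unfold w e; norm_num; ring

lemma sum_W_sq {M : ℕ} (r : ℝ) :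
    ∑ x : Fin M → Bool, W r x * ((cnt x : ℝ) - M * r)^2 = M * (r * (1-r)) := by
  have : ∀ x : Fin M → Bool, W r x * ((cnt x : ℝ) - M * r)^2 =
      ∑ j, ∑ l, W r x * (e r (x j) * e r (x l)) := by
    intro x
    rw [dev_eq, sq, Finset.sum_mul_sum]
    rw [Finset.mul_sum]
    exact Finset.sum_congr rfl fun j _ => by rw [Finset.mul_sum]
  rw [Finset.sum_congr rfl (fun x _ => this x), Finset.sum_comm]
  rw [Finset.sum_congr rfl (fun j (_ : j ∈ Finset.univ) => Finset.sum_comm)]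
  have : ∀ j : Fin M, ∑ l, ∑ x : Fin M → Bool, W r x * (e r (x j) * e r (x l)) = r * (1-r) := by
    intro j
    rw [Finset.sum_congr rfl (fun l (_ : l ∈ Finset.univ) => inner_sum r j l)]
    simp
  rw [Finset.sum_congr rfl (fun j _ => this j)]
  simp [Finset.card_univ, mul_comm]

lemma chebyshev {M : ℕ} {r a : ℝ} (h0 : 0 ≤ r) (h1 : r ≤ 1) (ha : 0 < a)
    (B : Finset (Fin M → Bool)) (hB : ∀ x, x ∉ B → a ≤ |(cnt x : ℝ) - M * r|) :
    1 - M * (r * (1-r)) / a^2 ≤ ∑ x ∈ B, W r x := by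
  have ha2 : (0:ℝ) < a^2 := by positivity
  have h2 : ∑ x ∈ Bᶜ, W r x ≤ M * (r * (1-r)) / a^2 := by
    have step : ∀ x ∈ Bᶜ, W r x ≤ W r x * ((cnt x:ℝ) - M*r)^2 / a^2 := by
      intro x hx
      rw [le_div_iff₀ ha2]
      have hdev : a^2 ≤ ((cnt x:ℝ) - M*r)^2 := by
        have := hB x (Finset.mem_compl.mp hx)
        calc a^2 ≤ |(cnt x:ℝ) - M*r|^2 := by
              apply pow_le_pow_left₀ ha.le this
          _ = ((cnt x:ℝ) - M*r)^2 := sq_abs _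
      have := mul_le_mul_of_nonneg_left hdev (W_nonneg h0 h1 x)
      linarith
    calc ∑ x ∈ Bᶜ, W r x ≤ ∑ x ∈ Bᶜ, W r x * ((cnt x:ℝ) - M*r)^2 / a^2 :=
          Finset.sum_le_sum step
      _ ≤ ∑ x : Fin M → Bool, W r x * ((cnt x:ℝ) - M*r)^2 / a^2 := by
          apply Finset.sum_le_sum_of_subset_of_nonneg (Finset.subset_univ _)
          intro x _ _
          exact div_nonneg (mul_nonneg (W_nonneg h0 h1 x) (sq_nonneg _)) ha2.le
      _ = M * (r * (1-r)) / a^2 := by rw [← Finset.sum_div, sum_W_sq]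
  have h3 : ∑ x ∈ B, W r x + ∑ x ∈ Bᶜ, W r x = 1 := by
    rw [Finset.sum_add_sum_compl, sum_W]
  linarith

end BernAmp

namespace BernAmp

lemma bern_toReal {r : ℝ} (h0 : 0 ≤ r) (h1 : r ≤ 1) (hp : (ENNReal.ofReal r).toNNReal ≤ 1) (b : Bool) :
    ((PMF.bernoulli (ENNReal.ofReal r).toNNReal hp) b).toReal = w r b := by
  rw [PMF.bernoulli_apply]
  cases b
  · simp [w]
    rw [← ENNReal.ofReal_one, ← ENNReal.ofReal_sub _ h0, ENNReal.toReal_ofReal (by linarith)]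
  · simpa [w] using h0

noncomputable def μB (M : ℕ) (p : ℝ≥0∞) (hp : p ≤ 1) : Measure (Fin M → Bool) :=
  Measure.pi fun _ : Fin M => (PMF.bernoulli p.toNNReal (by simpa using ENNReal.toNNReal_mono ENNReal.one_ne_top hp)).toMeasure

instance {M : ℕ} (p : ℝ≥0∞) (hp : p ≤ 1) : IsProbabilityMeasure (μB M p hp) := by
  unfold μB; infer_instance

lemma μB_singleton {M : ℕ} (p : ℝ≥0∞) (hp : p ≤ 1) (x : Fin M → Bool) :
    μB M p hp {x} = ∏ j, (PMF.bernoulli p.toNNReal (by simpa using ENNReal.toNNReal_mono ENNReal.one_ne_top hp)) (x j) := by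
  rw [μB, ← Set.univ_pi_singleton, Measure.pi_pi]
  exact Finset.prod_congr rfl fun j _ =>
    PMF.toMeasure_apply_singleton _ _ (measurableSet_singleton _)

lemma μB_singleton_toReal {M : ℕ} {r : ℝ} (h0 : 0 ≤ r) (h1 : r ≤ 1)
    (hp : ENNReal.ofReal r ≤ 1) (x : Fin M → Bool) :
    ((μB M (ENNReal.ofReal r) hp) {x}).toReal = W r x := by
  rw [μB_singleton, ENNReal.toReal_prod]
  exact Finset.prod_congr rfl fun j _ => bern_toReal h0 h1 _ (x j)

lemma measure_finset {M : ℕ} (μ : Measure (Fin M → Bool)) (A : Finset (Fin M → Bool)) :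
    μ ↑A = ∑ x ∈ A, μ {x} := by
  have h : (↑A : Set (Fin M → Bool)) = ⋃ x ∈ A, {x} := by ext y; simp
  rw [h, measure_biUnion_finset]
  · intro a _ b _ hab
    show Disjoint ({a} : Set (Fin M → Bool)) {b}
    exact Set.disjoint_singleton.mpr hab
  · exact fun b _ => measurableSet_singleton b

lemma μB_finset_toReal {M : ℕ} {r : ℝ} (h0 : 0 ≤ r) (h1 : r ≤ 1)
    (hp : ENNReal.ofReal r ≤ 1) (A : Finset (Fin M → Bool)) :
    ((μB M (ENNReal.ofReal r) hp) ↑A).toReal = ∑ x ∈ A, W r x := by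
  rw [measure_finset, ENNReal.toReal_sum (fun x _ => measure_ne_top _ _)]
  exact Finset.sum_congr rfl fun x _ => μB_singleton_toReal h0 h1 hp x

lemma bind_toReal {n m : ℕ} (p : ℝ≥0∞) (hp : p ≤ 1)
    (f : Kernel (Fin n → Bool) (Fin m → Bool)) [IsMarkovKernel f]
    (A : Set (Fin m → Bool)) (hA : MeasurableSet A) :
    (((μB n p hp).bind fun x => f x) A).toReal
      = ∑ x : Fin n → Bool, ((μB n p hp) {x}).toReal * ((f x) A).toReal := by
  rw [Measure.bind_apply hA f.measurable.aemeasurable, MeasureTheory.lintegral_fintype,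
    ENNReal.toReal_sum (fun x _ => ENNReal.mul_ne_top (measure_ne_top _ _) (measure_ne_top _ _))]
  exact Finset.sum_congr rfl fun x _ => by rw [ENNReal.toReal_mul, mul_comm]

lemma bind_univ {n m : ℕ} (p : ℝ≥0∞) (hp : p ≤ 1)
    (f : Kernel (Fin n → Bool) (Fin m → Bool)) [IsMarkovKernel f] :
    ((μB n p hp).bind fun x => f x) Set.univ = 1 := by
  rw [Measure.bind_apply MeasurableSet.univ f.measurable.aemeasurable]
  simp [measure_univ]

lemma le_tvDist {Ω : Type*} [MeasurableSpace Ω] {μ ν : Measure Ω}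
    (hμ : ∀ A : Set Ω, μ A ≤ 1) (hν : ∀ A : Set Ω, ν A ≤ 1)
    {A : Set Ω} (hA : MeasurableSet A) :
    |(μ A).toReal - (ν A).toReal| ≤ tvDist μ ν := by
  have hb : ∀ B : Set Ω, (μ B).toReal ≤ 1 ∧ (ν B).toReal ≤ 1 := by
    intro B
    constructor
    · simpa using ENNReal.toReal_mono (by norm_num) (hμ B)
    · simpa using ENNReal.toReal_mono (by norm_num) (hν B)
  apply le_ciSup (f := fun B : {B : Set Ω // MeasurableSet B} =>
    |(μ ↑B).toReal - (ν ↑B).toReal|) ?_ (⟨A, hA⟩ : {B : Set Ω // MeasurableSet B})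
  refine ⟨2, ?_⟩
  rintro y ⟨⟨B, hB⟩, rfl⟩
  have h1 := (hb B).1
  have h2 := (hb B).2
  have h3 : (0:ℝ) ≤ (μ B).toReal := ENNReal.toReal_nonneg
  have h4 : (0:ℝ) ≤ (ν B).toReal := ENNReal.toReal_nonneg
  rw [abs_sub_le_iff]
  constructor <;> linarith

end BernAmp


namespace BernAmp

lemma sqrt_pi_le (n : ℕ) (hn : 1 ≤ n) : Real.sqrt π ≤ Stirling.stirlingSeq n := by
  obtain ⟨k, rfl⟩ := Nat.exists_eq_add_of_le hn
  have ht : Filter.Tendsto (Stirling.stirlingSeq ∘ Nat.succ) Filter.atTop (nhds (Real.sqrt π)) := by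
    apply Stirling.tendsto_stirlingSeq_sqrt_pi.comp (Filter.tendsto_add_atTop_nat 1)
  have := Stirling.stirlingSeq'_antitone.le_of_tendsto ht k
  simpa [Function.comp, Nat.succ_eq_add_one, add_comm] using this

lemma stirling_le (n : ℕ) (hn : 1 ≤ n) : Stirling.stirlingSeq n ≤ Real.exp 1 / Real.sqrt 2 := by
  obtain ⟨k, rfl⟩ := Nat.exists_eq_add_of_le hn
  have h1 := Stirling.stirlingSeq'_antitone (Nat.zero_le k)
  rw [← Stirling.stirlingSeq_one]
  simpa [Function.comp, Nat.succ_eq_add_one, add_comm] using h1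

lemma factorial_upper {n : ℕ} (hn : 1 ≤ n) :
    (n ! : ℝ) * (Real.exp 1)^n ≤ Real.exp 1 * Real.sqrt n * (n:ℝ)^n := by
  have h1 := stirling_le n hn
  have hnp : (0:ℝ) < n := by exact_mod_cast hn
  have hd : (0:ℝ) < Real.sqrt (2*n) * ((n:ℝ)/Real.exp 1)^n := by positivity
  rw [Stirling.stirlingSeq, div_le_iff₀ hd] at h1
  have hE : (0:ℝ) < Real.exp 1 := Real.exp_pos 1
  have hsq : Real.sqrt (2*(n:ℝ)) = Real.sqrt 2 * Real.sqrt n := Real.sqrt_mul (by norm_num) _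
  have h2 : (0:ℝ) < (Real.exp 1)^n := by positivity
  calc (n ! : ℝ) * (Real.exp 1)^n
      ≤ (Real.exp 1 / Real.sqrt 2 * (Real.sqrt (2*n) * ((n:ℝ)/Real.exp 1)^n)) * (Real.exp 1)^n := by
        apply mul_le_mul_of_nonneg_right h1 h2.le
    _ = Real.exp 1 * Real.sqrt n * (n:ℝ)^n := by
        rw [hsq, div_pow]
        have hs2 : Real.sqrt 2 ≠ 0 := by positivity
        have hEn : ((Real.exp 1)^n : ℝ) ≠ 0 := by positivity
        field_simp
  
lemma factorial_lower {k : ℕ} (hk : 1 ≤ k) :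
    Real.sqrt π * (Real.sqrt 2 * Real.sqrt k * (k:ℝ)^k) ≤ (k ! : ℝ) * (Real.exp 1)^k := by
  have h1 := sqrt_pi_le k hk
  have hkp : (0:ℝ) < k := by exact_mod_cast hk
  rw [Stirling.stirlingSeq, le_div_iff₀ (by positivity)] at h1
  have hsq : Real.sqrt (2*(k:ℝ)) = Real.sqrt 2 * Real.sqrt k := Real.sqrt_mul (by norm_num) _
  rw [hsq, div_pow] at h1
  have h2 : (0:ℝ) < (Real.exp 1)^k := by positivity
  have := mul_le_mul_of_nonneg_right h1 h2.le
  calc Real.sqrt π * (Real.sqrt 2 * Real.sqrt k * (k:ℝ)^k)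
      = Real.sqrt π * (Real.sqrt 2 * Real.sqrt k * ((k:ℝ)^k / (Real.exp 1)^k)) * (Real.exp 1)^k := by
        field_simp
    _ ≤ (k ! : ℝ) * (Real.exp 1)^k := this

end BernAmp

namespace BernAmp

lemma exp_le_pi : Real.exp 1 ≤ π := by
  have h1 := Real.exp_one_lt_d9
  have h2 := Real.pi_gt_three
  linarith

lemma key_T {k l : ℕ} (hk : 1 ≤ k) (hl : 1 ≤ l) :
    ((k+l)! : ℝ) * (((k:ℝ)^k * (l:ℝ)^l) * (2 * (Real.sqrt k * Real.sqrt l)))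
      ≤ ((k ! : ℝ) * (l ! : ℝ)) * ((((k:ℝ)+(l:ℝ))^(k+l)) * Real.sqrt ((k:ℝ)+(l:ℝ))) := by
  set E := Real.exp 1 with hE
  have hEpos : (0:ℝ) < E := Real.exp_pos 1
  have hEn : (0:ℝ) < E^(k+l) := by positivity
  rw [← mul_le_mul_iff_of_pos_right hEn]
  have hup := factorial_upper (n := k + l) (by omega)
  have hlo1 := factorial_lower hk
  have hlo2 := factorial_lower hl
  have hcast : ((k+l:ℕ):ℝ) = (k:ℝ)+(l:ℝ) := by push_cast; ring
  rw [hcast] at hup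
  have hKp : (0:ℝ) ≤ (k:ℝ) := by positivity
  have hLp : (0:ℝ) ≤ (l:ℝ) := by positivity
  have hNp : (0:ℝ) < (k:ℝ)+(l:ℝ) := by
    have : (1:ℝ) ≤ (k:ℝ) := by exact_mod_cast hk
    linarith
  -- lower bound for k! * l! * E^(k+l)
  have hlow : π * (2 * (Real.sqrt k * Real.sqrt l)) * ((k:ℝ)^k * (l:ℝ)^l)
      ≤ ((k ! : ℝ) * (l ! : ℝ)) * E^(k+l) := by
    have hmul := mul_le_mul hlo1 hlo2 (by positivity) (by positivity)
    calc π * (2 * (Real.sqrt k * Real.sqrt l)) * ((k:ℝ)^k * (l:ℝ)^l)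
        = (Real.sqrt π * (Real.sqrt 2 * Real.sqrt k * (k:ℝ)^k)) *
            (Real.sqrt π * (Real.sqrt 2 * Real.sqrt l * (l:ℝ)^l)) := by
          have h1 : Real.sqrt π * Real.sqrt π = π :=
            Real.mul_self_sqrt Real.pi_pos.le
          have h2 : Real.sqrt 2 * Real.sqrt 2 = 2 :=
            Real.mul_self_sqrt (by norm_num)
          linear_combination (-(Real.sqrt 2*Real.sqrt 2) * Real.sqrt (k:ℝ) * Real.sqrt (l:ℝ) * ((k:ℝ)^k*(l:ℝ)^l)) * h1 + (-(π) * Real.sqrt (k:ℝ) * Real.sqrt (l:ℝ) * ((k:ℝ)^k*(l:ℝ)^l)) * h2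
      _ ≤ ((k ! : ℝ) * E^k) * ((l ! : ℝ) * E^l) := hmul
      _ = ((k ! : ℝ) * (l ! : ℝ)) * E^(k+l) := by rw [pow_add]; ring
  calc ((k+l)! : ℝ) * (((k:ℝ)^k * (l:ℝ)^l) * (2 * (Real.sqrt k * Real.sqrt l))) * E^(k+l)
      = ((k+l)! : ℝ) * E^(k+l) * (((k:ℝ)^k * (l:ℝ)^l) * (2 * (Real.sqrt k * Real.sqrt l))) := by
        ring
    _ ≤ (E * Real.sqrt ((k:ℝ)+(l:ℝ)) * ((k:ℝ)+(l:ℝ))^(k+l)) *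
          (((k:ℝ)^k * (l:ℝ)^l) * (2 * (Real.sqrt k * Real.sqrt l))) := by
        apply mul_le_mul_of_nonneg_right hup
        positivity
    _ = (Real.sqrt ((k:ℝ)+(l:ℝ)) * ((k:ℝ)+(l:ℝ))^(k+l)) *
          (E * (2 * (Real.sqrt k * Real.sqrt l)) * ((k:ℝ)^k * (l:ℝ)^l)) := by ring
    _ ≤ (Real.sqrt ((k:ℝ)+(l:ℝ)) * ((k:ℝ)+(l:ℝ))^(k+l)) *
          (π * (2 * (Real.sqrt k * Real.sqrt l)) * ((k:ℝ)^k * (l:ℝ)^l)) := by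
        apply mul_le_mul_of_nonneg_left _ (by positivity)
        apply mul_le_mul_of_nonneg_right _ (by positivity)
        apply mul_le_mul_of_nonneg_right exp_le_pi (by positivity)
    _ ≤ (Real.sqrt ((k:ℝ)+(l:ℝ)) * ((k:ℝ)+(l:ℝ))^(k+l)) * (((k ! : ℝ) * (l ! : ℝ)) * E^(k+l)) := by
        apply mul_le_mul_of_nonneg_left hlow (by positivity)
    _ = ((k ! : ℝ) * (l ! : ℝ)) * ((((k:ℝ)+(l:ℝ))^(k+l)) * Real.sqrt ((k:ℝ)+(l:ℝ))) * E^(k+l) := by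
        ring

lemma choose_bound {k l : ℕ} (hk : 1 ≤ k) (hl : 1 ≤ l) :
    ((k+l).choose k : ℝ) * ((k:ℝ)^k * (l:ℝ)^l / ((k:ℝ)+(l:ℝ))^(k+l))
      ≤ (1/2) * Real.sqrt ((k:ℝ)+(l:ℝ)) / (Real.sqrt k * Real.sqrt l) := by
  have hT := key_T hk hl
  have hfac : ((k+l).choose k : ℝ) = ((k+l)! : ℝ) / ((k ! : ℝ) * (l ! : ℝ)) := by
    rw [Nat.cast_choose ℝ (Nat.le_add_right k l), Nat.add_sub_cancel_left]
  have hKp : (0:ℝ) < (k:ℝ) := by exact_mod_cast hk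
  have hLp : (0:ℝ) < (l:ℝ) := by exact_mod_cast hl
  have hNp : (0:ℝ) < (k:ℝ)+(l:ℝ) := by linarith
  have hfp : (0:ℝ) < (k ! : ℝ) * (l ! : ℝ) := by positivity
  rw [hfac, _root_.div_mul_div_comm, div_le_div_iff₀ (by positivity) (by positivity)]
  nlinarith [hT]

end BernAmp

namespace BernAmp

lemma pow_max {k l : ℕ} (hk : 1 ≤ k) (hl : 1 ≤ l) {r : ℝ} (h0 : 0 ≤ r) (h1 : r ≤ 1) :
    r^k * (1-r)^l ≤ ((k:ℝ)/((k:ℝ)+(l:ℝ)))^k * ((l:ℝ)/((k:ℝ)+(l:ℝ)))^l := by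
  have hKp : (0:ℝ) < (k:ℝ) := by exact_mod_cast hk
  have hLp : (0:ℝ) < (l:ℝ) := by exact_mod_cast hl
  have hNp : (0:ℝ) < (k:ℝ)+(l:ℝ) := by linarith
  rcases eq_or_lt_of_le h0 with h0' | h0'
  · rw [← h0', zero_pow (by omega)]
    have : (0:ℝ) ≤ ((k:ℝ)/((k:ℝ)+(l:ℝ)))^k * ((l:ℝ)/((k:ℝ)+(l:ℝ)))^l := by positivity
    linarith [this]
  rcases eq_or_lt_of_le h1 with h1' | h1'
  · rw [h1']
    norm_num
    rw [zero_pow (by omega)]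
    have : (0:ℝ) ≤ ((k:ℝ)/((k:ℝ)+(l:ℝ)))^k * ((l:ℝ)/((k:ℝ)+(l:ℝ)))^l := by positivity
    nlinarith [this]
  set K := (k:ℝ); set L := (l:ℝ); set N := K + L with hN
  set a := r * N / K with ha
  set b := (1-r) * N / L with hb
  have hap : 0 < a := by apply _root_.div_pos (by nlinarith) hKp
  have hbp : 0 < b := by apply _root_.div_pos (by nlinarith) hLp
  have hgeom := Real.geom_mean_le_arith_mean2_weighted
    (w₁ := K/N) (w₂ := L/N) (p₁ := a) (p₂ := b)
    (by positivity) (by positivity) hap.le hbp.le (by field_simp; exact hN.symm)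
  have hsum : K/N * a + L/N * b = 1 := by
    rw [ha, hb]; field_simp; ring
  rw [hsum] at hgeom
  have hpow : (a ^ ((K/N):ℝ) * b ^ ((L/N):ℝ))^(k+l) ≤ 1 := by
    apply pow_le_one₀ (by positivity) hgeom
  have e1 : (a ^ ((K/N):ℝ))^(k+l) = a ^ k := by
    rw [← Real.rpow_natCast (a ^ ((K/N):ℝ)) (k+l), ← Real.rpow_mul hap.le]
    have : (K/N) * ((k+l:ℕ):ℝ) = (k:ℕ) := by push_cast; field_simp; rw [hN]; ring
    rw [this, Real.rpow_natCast]
  have e2 : (b ^ ((L/N):ℝ))^(k+l) = b ^ l := by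
    rw [← Real.rpow_natCast (b ^ ((L/N):ℝ)) (k+l), ← Real.rpow_mul hbp.le]
    have : (L/N) * ((k+l:ℕ):ℝ) = (l:ℕ) := by push_cast; field_simp; rw [hN]; ring
    rw [this, Real.rpow_natCast]
  rw [mul_pow, e1, e2] at hpow
  have hfin : r^k * (1-r)^l = (a ^ k * b ^ l) * ((K/N)^k * (L/N)^l) := by
    have ea : a * (K/N) = r := by rw [ha]; field_simp
    have eb : b * (L/N) = 1 - r := by rw [hb]; field_simp
    calc r^k * (1-r)^l = (a * (K/N))^k * (b * (L/N))^l := by rw [ea, eb]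
      _ = (a ^ k * b ^ l) * ((K/N)^k * (L/N)^l) := by rw [mul_pow, mul_pow]; ring
  rw [hfin]
  have hrhs : (0:ℝ) ≤ (K/N)^k * (L/N)^l := by positivity
  nlinarith [hpow, hrhs]

end BernAmp

namespace BernAmp

noncomputable def g (n k : ℕ) : ℝ := ((k:ℝ)/(n:ℝ))^k * (((n-k:ℕ):ℝ)/(n:ℝ))^(n-k)

lemma g_nonneg (n k : ℕ) : 0 ≤ g n k := by unfold g; positivity

lemma g_zero {n : ℕ} (hn : 1 ≤ n) : g n 0 = 1 := by
  have hnp : ((n:ℝ)) ≠ 0 := by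
    have : (0:ℝ) < (n:ℝ) := by exact_mod_cast hn
    linarith
  unfold g
  simp [div_self hnp]

lemma g_self {n : ℕ} (hn : 1 ≤ n) : g n n = 1 := by
  have hnp : ((n:ℝ)) ≠ 0 := by
    have : (0:ℝ) < (n:ℝ) := by exact_mod_cast hn
    linarith
  unfold g
  simp [div_self hnp]

lemma pow_le_g {n k : ℕ} (hn : 1 ≤ n) (hk : k ≤ n) {r : ℝ} (h0 : 0 ≤ r) (h1 : r ≤ 1) :
    r^k * (1-r)^(n-k) ≤ g n k := by
  have hnp : (0:ℝ) < (n:ℝ) := by exact_mod_cast hn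
  rcases Nat.eq_zero_or_pos k with rfl | hk1
  · unfold g
    simp only [Nat.sub_zero, pow_zero, Nat.cast_zero, one_mul]
    rw [div_self hnp.ne']
    simp only [one_pow, one_mul]
    exact pow_le_one₀ (by linarith) (by linarith)
  rcases eq_or_lt_of_le hk with rfl | hkn
  · unfold g
    simp only [Nat.sub_self, pow_zero, mul_one]
    rw [div_self hnp.ne']
    simp only [one_pow]
    exact pow_le_one₀ h0 h1
  · set l := n - k with hl
    have hl1 : 1 ≤ l := by omega
    have hcast : (k:ℝ) + (l:ℝ) = (n:ℝ) := by
      have : k + l = n := by omega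
      exact_mod_cast congrArg (Nat.cast : ℕ → ℝ) this
    have := pow_max hk1 hl1 h0 h1
    rw [hcast] at this
    exact this

end BernAmp

namespace BernAmp

lemma sum_inv_sqrt (n : ℕ) : ∑ k ∈ Finset.Ico 1 (n+1), 1/Real.sqrt k ≤ 2 * Real.sqrt n := by
  induction n with
  | zero => simp
  | succ n ih =>
    rw [Finset.sum_Ico_succ_top (by omega)]
    have ha : Real.sqrt n ≥ 0 := Real.sqrt_nonneg _
    have hb : Real.sqrt ((n:ℝ)+1) > 0 := Real.sqrt_pos.mpr (by positivity)
    have hcast : ((n+1:ℕ):ℝ) = (n:ℝ)+1 := by push_cast; ring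
    have hsa : Real.sqrt n * Real.sqrt n = n := Real.mul_self_sqrt (by positivity)
    have hsb : Real.sqrt ((n:ℝ)+1) * Real.sqrt ((n:ℝ)+1) = (n:ℝ)+1 :=
      Real.mul_self_sqrt (by positivity)
    have key : 1/Real.sqrt ((n:ℝ)+1) ≤ 2*Real.sqrt ((n:ℝ)+1) - 2*Real.sqrt n := by
      rw [div_le_iff₀ hb]
      nlinarith [sq_nonneg (Real.sqrt ((n:ℝ)+1) - Real.sqrt n)]
    rw [hcast]
    linarith

lemma term_bound {n k : ℕ} (hk : 1 ≤ k) (hkn : k < n) :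
    Real.sqrt n / (Real.sqrt k * Real.sqrt ((n-k:ℕ))) ≤
      Real.sqrt 2 * (1/Real.sqrt k + 1/Real.sqrt ((n-k:ℕ))) := by
  have hkp : (0:ℝ) < Real.sqrt k := Real.sqrt_pos.mpr (by exact_mod_cast hk)
  have hlp : (0:ℝ) < Real.sqrt ((n-k:ℕ)) := Real.sqrt_pos.mpr (by
    have : 1 ≤ n - k := by omega
    exact_mod_cast this)
  rcases le_or_gt (2*k) n with h | h
  · -- k ≤ n/2, so n ≤ 2(n-k)
    have h2 : (n:ℝ) ≤ 2 * ((n-k:ℕ):ℝ) := by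
      have : n ≤ 2 * (n - k) := by omega
      exact_mod_cast this
    have hs : Real.sqrt n ≤ Real.sqrt 2 * Real.sqrt ((n-k:ℕ)) := by
      rw [← Real.sqrt_mul (by norm_num)]
      exact Real.sqrt_le_sqrt h2
    calc Real.sqrt n / (Real.sqrt k * Real.sqrt ((n-k:ℕ)))
        ≤ (Real.sqrt 2 * Real.sqrt ((n-k:ℕ))) / (Real.sqrt k * Real.sqrt ((n-k:ℕ))) := by
          apply div_le_div_of_nonneg_right hs (by positivity) |>.trans_eq rfl
      _ = Real.sqrt 2 * (1/Real.sqrt k) := by field_simp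
      _ ≤ Real.sqrt 2 * (1/Real.sqrt k + 1/Real.sqrt ((n-k:ℕ))) := by
          have : (0:ℝ) < 1/Real.sqrt ((n-k:ℕ)) := by positivity
          have h2' : (0:ℝ) ≤ Real.sqrt 2 := Real.sqrt_nonneg _
          nlinarith
  · -- n < 2k, so n ≤ 2k
    have h2 : (n:ℝ) ≤ 2 * (k:ℝ) := by
      have : n ≤ 2 * k := by omega
      exact_mod_cast this
    have hs : Real.sqrt n ≤ Real.sqrt 2 * Real.sqrt k := by
      rw [← Real.sqrt_mul (by norm_num)]
      exact Real.sqrt_le_sqrt h2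
    calc Real.sqrt n / (Real.sqrt k * Real.sqrt ((n-k:ℕ)))
        ≤ (Real.sqrt 2 * Real.sqrt k) / (Real.sqrt k * Real.sqrt ((n-k:ℕ))) := by
          apply div_le_div_of_nonneg_right hs (by positivity) |>.trans_eq rfl
      _ = Real.sqrt 2 * (1/Real.sqrt ((n-k:ℕ))) := by field_simp
      _ ≤ Real.sqrt 2 * (1/Real.sqrt k + 1/Real.sqrt ((n-k:ℕ))) := by
          have : (0:ℝ) < 1/Real.sqrt k := by positivity
          have h2' : (0:ℝ) ≤ Real.sqrt 2 := Real.sqrt_nonneg _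
          nlinarith

lemma middle_sum {n : ℕ} (hn : 1 ≤ n) :
    ∑ k ∈ Finset.Ico 1 n, Real.sqrt n / (Real.sqrt k * Real.sqrt ((n-k:ℕ))) ≤
      6 * Real.sqrt n := by
  have step1 : ∑ k ∈ Finset.Ico 1 n, Real.sqrt n / (Real.sqrt k * Real.sqrt ((n-k:ℕ)))
      ≤ ∑ k ∈ Finset.Ico 1 n, Real.sqrt 2 * (1/Real.sqrt k + 1/Real.sqrt ((n-k:ℕ))) := by
    apply Finset.sum_le_sum
    intro k hk
    rw [Finset.mem_Ico] at hk
    exact term_bound hk.1 hk.2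
  have hrefl : ∑ k ∈ Finset.Ico 1 n, 1/Real.sqrt ((n-k:ℕ))
      = ∑ k ∈ Finset.Ico 1 n, 1/Real.sqrt k := by
    have := Finset.sum_Ico_reflect (fun j => 1/Real.sqrt j) 1 (n := n) (m := n) (by omega)
    simpa using this
  have hico : ∑ k ∈ Finset.Ico 1 n, 1/Real.sqrt k ≤ 2 * Real.sqrt n := by
    calc ∑ k ∈ Finset.Ico 1 n, 1/Real.sqrt k
        ≤ ∑ k ∈ Finset.Ico 1 (n+1), 1/Real.sqrt k := by
          apply Finset.sum_le_sum_of_subset_of_nonneg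
          · apply Finset.Ico_subset_Ico le_rfl (by omega)
          · intro i _ _; positivity
      _ ≤ 2 * Real.sqrt n := sum_inv_sqrt n
  have hs2 : Real.sqrt 2 ≤ (3:ℝ)/2 := by
    nlinarith [Real.sq_sqrt (show (0:ℝ) ≤ 2 by norm_num), Real.sqrt_nonneg 2]
  calc ∑ k ∈ Finset.Ico 1 n, Real.sqrt n / (Real.sqrt k * Real.sqrt ((n-k:ℕ)))
      ≤ ∑ k ∈ Finset.Ico 1 n, Real.sqrt 2 * (1/Real.sqrt k + 1/Real.sqrt ((n-k:ℕ))) := step1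
    _ = Real.sqrt 2 * ((∑ k ∈ Finset.Ico 1 n, 1/Real.sqrt k)
          + ∑ k ∈ Finset.Ico 1 n, 1/Real.sqrt ((n-k:ℕ))) := by
        rw [← Finset.mul_sum, Finset.sum_add_distrib]
    _ = Real.sqrt 2 * (2 * ∑ k ∈ Finset.Ico 1 n, 1/Real.sqrt k) := by rw [hrefl]; ring
    _ ≤ (3/2) * (2 * (2 * Real.sqrt n)) := by
        have h0 : 0 ≤ ∑ k ∈ Finset.Ico 1 n, 1/Real.sqrt k := by
          apply Finset.sum_nonneg; intro i _; positivity
        have h2' : (0:ℝ) ≤ Real.sqrt 2 := Real.sqrt_nonneg _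
        nlinarith [hico]
    _ = 6 * Real.sqrt n := by ring

lemma sum_range_g {n : ℕ} (hn : 1 ≤ n) :
    ∑ k ∈ Finset.range (n+1), (n.choose k : ℝ) * g n k ≤ 5 * Real.sqrt n := by
  have hmid : ∀ k ∈ Finset.Ico 1 n, (n.choose k : ℝ) * g n k
      ≤ (1/2) * (Real.sqrt n / (Real.sqrt k * Real.sqrt ((n-k:ℕ)))) := by
    intro k hk
    rw [Finset.mem_Ico] at hk
    obtain ⟨hk1, hkn⟩ := hk
    set l := n - k with hl
    have hl1 : 1 ≤ l := by omega
    have hkl : k + l = n := by omega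
    have hcast : (k:ℝ) + (l:ℝ) = (n:ℝ) := by exact_mod_cast congrArg (Nat.cast : ℕ → ℝ) hkl
    have hcb := choose_bound hk1 hl1
    rw [hkl, hcast] at hcb
    have hge : g n k = (k:ℝ)^k * (l:ℝ)^l / ((n:ℝ))^n := by
      unfold g
      rw [← hl, div_pow, div_pow, _root_.div_mul_div_comm, ← pow_add, hkl]
    rw [hge]
    calc (n.choose k : ℝ) * ((k:ℝ)^k * (l:ℝ)^l / ((n:ℝ))^n)
        ≤ (1/2) * Real.sqrt n / (Real.sqrt k * Real.sqrt l) := hcb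
      _ = (1/2) * (Real.sqrt n / (Real.sqrt k * Real.sqrt l)) := by ring
  have hsplit : ∑ k ∈ Finset.range (n+1), (n.choose k : ℝ) * g n k
      = (n.choose 0 : ℝ) * g n 0 + (∑ k ∈ Finset.Ico 1 n, (n.choose k : ℝ) * g n k)
        + (n.choose n : ℝ) * g n n := by
    rw [Finset.sum_range_succ, Finset.range_eq_Ico,
      Finset.sum_eq_sum_Ico_succ_bot (by omega : 0 < n)]
  have h1 : (1:ℝ) ≤ Real.sqrt n := by
    rw [show (1:ℝ) = Real.sqrt 1 from (Real.sqrt_one).symm]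
    exact Real.sqrt_le_sqrt (by exact_mod_cast hn)
  have hmids : ∑ k ∈ Finset.Ico 1 n, (n.choose k : ℝ) * g n k ≤ 3 * Real.sqrt n := by
    calc ∑ k ∈ Finset.Ico 1 n, (n.choose k : ℝ) * g n k
        ≤ ∑ k ∈ Finset.Ico 1 n, (1/2) * (Real.sqrt n / (Real.sqrt k * Real.sqrt ((n-k:ℕ)))) :=
          Finset.sum_le_sum hmid
      _ = (1/2) * ∑ k ∈ Finset.Ico 1 n, Real.sqrt n / (Real.sqrt k * Real.sqrt ((n-k:ℕ))) := by
          rw [Finset.mul_sum]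
      _ ≤ (1/2) * (6 * Real.sqrt n) := by
          have := middle_sum hn
          linarith
      _ = 3 * Real.sqrt n := by ring
  rw [hsplit, g_zero hn, g_self hn]
  simp only [Nat.choose_zero_right, Nat.choose_self, Nat.cast_one, mul_one, one_mul]
  linarith

end BernAmp

namespace BernAmp

def eFin (n : ℕ) : (Fin n → Bool) ≃ Finset (Fin n) where
  toFun x := Finset.univ.filter fun j => x j = true
  invFun s := fun j => decide (j ∈ s)
  left_inv x := by funext j; simp
  right_inv s := by ext j; simp

lemma sum_cnt {n : ℕ} (h : ℕ → ℝ) :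
    ∑ x : Fin n → Bool, h (cnt x) = ∑ k ∈ Finset.range (n+1), (n.choose k : ℝ) * h k := by
  calc ∑ x : Fin n → Bool, h (cnt x) = ∑ s : Finset (Fin n), h s.card :=
      Fintype.sum_equiv (eFin n) _ _ (fun x => rfl)
    _ = ∑ s ∈ (Finset.univ : Finset (Fin n)).powerset, h s.card := by
        rw [Finset.powerset_univ]
    _ = ∑ k ∈ Finset.range (n+1), (n.choose k : ℝ) * h k := by
        rw [Finset.sum_powerset_apply_card]
        simp [Finset.card_univ, nsmul_eq_mul]

lemma W_le_g {n : ℕ} (hn : 1 ≤ n) {r : ℝ} (h0 : 0 ≤ r) (h1 : r ≤ 1) (x : Fin n → Bool) :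
    W r x ≤ g n (cnt x) := by
  rw [W_eq_pow]
  exact pow_le_g hn (cnt_le x) h0 h1

lemma sum_g_le {n : ℕ} (hn : 1 ≤ n) :
    ∑ x : Fin n → Bool, g n (cnt x) ≤ 5 * Real.sqrt n := by
  rw [sum_cnt (g n)]
  exact sum_range_g hn

end BernAmp

open MeasureTheory ProbabilityTheory BernAmp
open scoped NNReal ENNReal

set_option maxHeartbeats 1000000 in
/-- The class of i.i.d. Bernoulli distributions with unknown bias cannot be amplified by
more than a constant factor: for some `c' > 0` and all large `n`, no kernel from `n` to
`m ≥ (1+c')·n` samples fools every bias `p`. -/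
theorem bernoulli_amplification_lower :
    ∃ c' : ℝ, 0 < c' ∧ ∃ N₀ : ℕ, ∀ n : ℕ, N₀ ≤ n → ∀ m : ℕ, (1 + c') * n ≤ m →
      ∀ f : Kernel (Fin n → Bool) (Fin m → Bool), IsMarkovKernel f →
        ∃ (p : ℝ≥0∞) (hp : p ≤ 1),
          1 / 3 < tvDist
            ((Measure.pi fun _ : Fin n => (PMF.bernoulli p.toNNReal (by simpa using ENNReal.toNNReal_mono ENNReal.one_ne_top hp)).toMeasure).bind
              (fun x => f x))
            (Measure.pi fun _ : Fin m => (PMF.bernoulli p.toNNReal (by simpa using ENNReal.toNNReal_mono ENNReal.one_ne_top hp)).toMeasure) := by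
  refine ⟨1000000, by norm_num, 4, ?_⟩
  intro n hn m hm f hf
  by_contra hcon
  push_neg at hcon
  -- numeric setup
  have hn1 : 1 ≤ n := by omega
  have hm' : 1000000 * n ≤ m := by
    have hnr : (0:ℝ) ≤ (n:ℝ) := by positivity
    have h1 : ((1000000 * n : ℕ) : ℝ) ≤ (m:ℝ) := by push_cast; nlinarith [hm]
    exact_mod_cast h1
  set K := Nat.sqrt m / 10 with hKdef
  set s := Nat.sqrt n with hsdef
  have hs2 : 2 ≤ s := by
    rw [hsdef, Nat.le_sqrt]; omega
  have hsq_n : s * s ≤ n := by have := Nat.sqrt_le' n; rw [pow_two] at this; exact this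
  have h1000 : 1000 * s ≤ Nat.sqrt m := by
    rw [Nat.le_sqrt]
    calc 1000 * s * (1000 * s) = 1000000 * (s * s) := by ring
      _ ≤ 1000000 * n := by omega
      _ ≤ m := hm'
  have hsK : 100 * s ≤ K := by
    rw [hKdef]
    rw [Nat.le_div_iff_mul_le (by norm_num)]
    omega
  have hK1 : 1 ≤ K := by omega
  have hKm : 100 * (K * K) ≤ m := by
    have h10 : 10 * K ≤ Nat.sqrt m := by
      rw [hKdef]
      have := Nat.div_mul_le_self (Nat.sqrt m) 10
      omega
    calc 100 * (K * K) = (10 * K) * (10 * K) := by ring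
      _ ≤ Nat.sqrt m * Nat.sqrt m := Nat.mul_le_mul h10 h10
      _ ≤ m := by have := Nat.sqrt_le' m; rw [pow_two] at this; exact this
  have hm1 : 1 ≤ m := by omega
  have hKr : (0:ℝ) < (K:ℝ) := by exact_mod_cast hK1
  have hmr : (0:ℝ) < (m:ℝ) := by exact_mod_cast hm1
  -- biases
  set r : ℕ → ℝ := fun i => (2*i+1)/(2*K) with hrdef
  have hr01 : ∀ i ∈ Finset.range K, 0 ≤ r i ∧ r i ≤ 1 := by
    intro i hi
    rw [Finset.mem_range] at hi
    constructor
    · apply div_nonneg (by positivity) (by positivity)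
    · rw [div_le_one (by positivity)]
      have : (i:ℝ) + 1 ≤ (K:ℝ) := by exact_mod_cast hi
      linarith
  set p : ℕ → ℝ≥0∞ := fun i => ENNReal.ofReal (r i) with hpdef
  have hp : ∀ i ∈ Finset.range K, p i ≤ 1 := by
    intro i hi
    rw [hpdef]
    simpa using ENNReal.ofReal_le_one.mpr (hr01 i hi).2
  set B : ℕ → Finset (Fin m → Bool) :=
    fun i => Finset.univ.filter (fun x => m*i < K * cnt x ∧ K * cnt x < m*(i+1)) with hBdef
  -- Chebyshev: true measure of B i is at least 99/100
  have htrue : ∀ i ∈ Finset.range K, (99:ℝ)/100 ≤ ∑ x ∈ B i, W (r i) x := by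
    intro i hi
    obtain ⟨h0, h1⟩ := hr01 i hi
    have ha : (0:ℝ) < (m:ℝ)/(2*K) := by positivity
    have hri : (m:ℝ) * r i * (2*K) = m*(2*(i:ℝ)+1) := by
      rw [hrdef]
      field_simp
    have hBcond : ∀ x, x ∉ B i → (m:ℝ)/(2*K) ≤ |(cnt x : ℝ) - m * r i| := by
      intro x hx
      rw [hBdef] at hx
      simp only [Finset.mem_filter, Finset.mem_univ, true_and, not_and, not_lt] at hx
      by_cases hc : K * cnt x ≤ m * i
      · have hcr : (K:ℝ) * (cnt x:ℝ) ≤ (m:ℝ)*(i:ℝ) := by exact_mod_cast hc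
        rw [le_abs]
        right
        rw [neg_sub, div_le_iff₀ (by positivity : (0:ℝ) < 2*(K:ℝ))]
        nlinarith [hri, hcr]
      · have hc2 : m*(i+1) ≤ K * cnt x := by omega
        have hcr : (m:ℝ)*((i:ℝ)+1) ≤ (K:ℝ) * (cnt x:ℝ) := by exact_mod_cast hc2
        rw [le_abs]
        left
        rw [div_le_iff₀ (by positivity : (0:ℝ) < 2*(K:ℝ))]
        nlinarith [hri, hcr]
    have hcheb := chebyshev h0 h1 ha (B i) hBcond
    have hr14 : r i * (1 - r i) ≤ 1/4 := by nlinarith [sq_nonneg (r i - 1/2)]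
    have hKm100 : (100:ℝ)*((K:ℝ)*(K:ℝ)) ≤ (m:ℝ) := by exact_mod_cast hKm
    have hvar : (m:ℝ) * (r i * (1 - r i)) / ((m:ℝ)/(2*K))^2 ≤ 1/100 := by
      have h2K : (0:ℝ) < (2*(K:ℝ))^2 := by positivity
      have e : ((m:ℝ)/(2*K))^2 * ((2*(K:ℝ))^2) = (m:ℝ)^2 := by
        rw [div_pow]
        field_simp
      have key : (m:ℝ) * (r i * (1-r i)) * ((2*(K:ℝ))^2) * 100 ≤ (m:ℝ)^2 := by
        nlinarith [mul_le_mul_of_nonneg_left hr14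
            (by positivity : (0:ℝ) ≤ 100*(m:ℝ)*(2*(K:ℝ))^2),
          mul_le_mul_of_nonneg_left hKm100 hmr.le]
      have h3 : ((m:ℝ) * (r i * (1-r i))) * 100 * ((2*(K:ℝ))^2)
          ≤ ((m:ℝ)/(2*K))^2 * ((2*(K:ℝ))^2) := by
        calc ((m:ℝ) * (r i * (1-r i))) * 100 * ((2*(K:ℝ))^2)
            = (m:ℝ) * (r i * (1-r i)) * ((2*(K:ℝ))^2) * 100 := by ring
          _ ≤ (m:ℝ)^2 := key
          _ = ((m:ℝ)/(2*K))^2 * ((2*(K:ℝ))^2) := e.symm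
      have h4 := le_of_mul_le_mul_right h3 h2K
      rw [div_le_iff₀ (by positivity : (0:ℝ) < ((m:ℝ)/(2*K))^2)]
      linarith
    linarith
  -- disjointness of the B i
  have hdisj : (↑(Finset.range K) : Set ℕ).PairwiseDisjoint
      (fun i => (↑(B i) : Set (Fin m → Bool))) := by
    intro i _ j _ hij
    simp only [Function.onFun]
    rw [Set.disjoint_left]
    intro x hxi hxj
    rw [hBdef] at hxi hxj
    simp only [Finset.coe_filter, Finset.mem_univ, true_and, Set.mem_setOf_eq] at hxi hxj
    rcases lt_or_gt_of_ne hij with h | h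
    · have hb : m*(i+1) ≤ m*j := Nat.mul_le_mul_left m (by omega)
      exact absurd (lt_of_lt_of_le hxi.2 (le_trans hb hxj.1.le)) (lt_irrefl _)
    · have hb : m*(j+1) ≤ m*i := Nat.mul_le_mul_left m (by omega)
      exact absurd (lt_of_lt_of_le hxj.2 (le_trans hb hxi.1.le)) (lt_irrefl _)
  haveI := hf
  -- kernel output masses sum to at most one
  have hFsum : ∀ x : Fin n → Bool, ∑ i ∈ Finset.range K, ((f x) ↑(B i)).toReal ≤ 1 := by
    intro x
    have h1 : ∑ i ∈ Finset.range K, (f x) ↑(B i)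
        = (f x) (⋃ i ∈ Finset.range K, (↑(B i) : Set (Fin m → Bool))) :=
      (measure_biUnion_finset hdisj (fun b _ => (B b).finite_toSet.measurableSet)).symm
    have h2 : (f x) (⋃ i ∈ Finset.range K, (↑(B i) : Set (Fin m → Bool))) ≤ 1 := prob_le_one
    calc ∑ i ∈ Finset.range K, ((f x) ↑(B i)).toReal
        = (∑ i ∈ Finset.range K, (f x) ↑(B i)).toReal :=
          (ENNReal.toReal_sum (fun i _ => measure_ne_top _ _)).symm
      _ ≤ (1:ℝ≥0∞).toReal := ENNReal.toReal_mono ENNReal.one_ne_top (h1 ▸ h2)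
      _ = 1 := by simp
  -- amplified measure of B i is at least 3/5
  have hamp : ∀ i ∈ Finset.range K,
      (3:ℝ)/5 ≤ ∑ x : Fin n → Bool, W (r i) x * ((f x) ↑(B i)).toReal := by
    intro i hi
    obtain ⟨h0, h1⟩ := hr01 i hi
    have hpi := hp i hi
    have hpieq : p i = ENNReal.ofReal (r i) := rfl
    have htv : tvDist ((μB n (p i) hpi).bind fun x => f x) (μB m (p i) hpi) ≤ 1/3 :=
      hcon (p i) hpi
    have hμle : ∀ A : Set (Fin m → Bool), ((μB n (p i) hpi).bind fun x => f x) A ≤ 1 := by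
      intro A
      calc ((μB n (p i) hpi).bind fun x => f x) A
          ≤ ((μB n (p i) hpi).bind fun x => f x) Set.univ := measure_mono (Set.subset_univ A)
        _ = 1 := bind_univ _ _ _
    have hνle : ∀ A : Set (Fin m → Bool), (μB m (p i) hpi) A ≤ 1 := fun A => prob_le_one
    have habs := le_tvDist hμle hνle ((B i).finite_toSet.measurableSet)
    have hb1 : ((μB m (p i) hpi) ↑(B i)).toReal = ∑ x ∈ B i, W (r i) x := by
      exact μB_finset_toReal h0 h1 hpi (B i)
    have hb2 : (((μB n (p i) hpi).bind fun x => f x) ↑(B i)).toReal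
        = ∑ x : Fin n → Bool, W (r i) x * ((f x) ↑(B i)).toReal := by
      rw [bind_toReal (p i) hpi f ↑(B i) ((B i).finite_toSet.measurableSet)]
      exact Finset.sum_congr rfl fun x _ => by
        rw [μB_singleton_toReal h0 h1 hpi x]
    have h99 := htrue i hi
    rw [hb1, hb2] at habs
    have := abs_sub_le_iff.mp (le_trans habs htv)
    linarith [this.2]
  -- summing up
  have hsum1 : (K:ℝ) * (3/5)
      ≤ ∑ i ∈ Finset.range K, ∑ x : Fin n → Bool, W (r i) x * ((f x) ↑(B i)).toReal := by
    calc (K:ℝ) * (3/5) = ∑ _i ∈ Finset.range K, (3:ℝ)/5 := by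
          rw [Finset.sum_const, Finset.card_range, nsmul_eq_mul]
      _ ≤ _ := Finset.sum_le_sum hamp
  have hsum2 : ∑ i ∈ Finset.range K, ∑ x : Fin n → Bool, W (r i) x * ((f x) ↑(B i)).toReal
      = ∑ x : Fin n → Bool, ∑ i ∈ Finset.range K, W (r i) x * ((f x) ↑(B i)).toReal :=
    Finset.sum_comm
  have hsum3 : ∑ x : Fin n → Bool, ∑ i ∈ Finset.range K, W (r i) x * ((f x) ↑(B i)).toReal
      ≤ ∑ x : Fin n → Bool, g n (cnt x) := by
    apply Finset.sum_le_sum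
    intro x _
    calc ∑ i ∈ Finset.range K, W (r i) x * ((f x) ↑(B i)).toReal
        ≤ ∑ i ∈ Finset.range K, g n (cnt x) * ((f x) ↑(B i)).toReal := by
          apply Finset.sum_le_sum
          intro i hi
          obtain ⟨h0, h1⟩ := hr01 i hi
          exact mul_le_mul_of_nonneg_right (W_le_g hn1 h0 h1 x) ENNReal.toReal_nonneg
      _ = g n (cnt x) * ∑ i ∈ Finset.range K, ((f x) ↑(B i)).toReal := by
          rw [Finset.mul_sum]
      _ ≤ g n (cnt x) * 1 := mul_le_mul_of_nonneg_left (hFsum x) (g_nonneg n (cnt x))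
      _ = g n (cnt x) := mul_one _
  have hsum4 := sum_g_le hn1
  -- final numeric contradiction
  have hsrK : (100:ℝ) * (s:ℝ) ≤ (K:ℝ) := by exact_mod_cast hsK
  have hs2r : (2:ℝ) ≤ (s:ℝ) := by exact_mod_cast hs2
  have hsr : Real.sqrt n ≤ (s:ℝ) + 1 := by
    have h1 : (n:ℝ) ≤ ((s:ℝ)+1)^2 := by
      have := Nat.lt_succ_sqrt n
      have h2 : (n:ℝ) < ((s:ℝ)+1)*((s:ℝ)+1) := by exact_mod_cast this
      nlinarith
    calc Real.sqrt n ≤ Real.sqrt (((s:ℝ)+1)^2) := Real.sqrt_le_sqrt h1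
      _ = (s:ℝ)+1 := Real.sqrt_sq (by positivity)
  linarith
end
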